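/- arXiv:2104.00910 — 5 statements merged into one kernel-verified Lean document; each statement's English description precedes it below -/
import Mathlib

section
/- Let μ₀, μ₁ be Borel probability measures on ℝ^m with finite second moments, and let γ be an optimal coupling of μ₀ and μ₁, i.e. a coupling with ∫ |x − y|² dγ(x,y) = W₂²(μ₀, μ₁). For t ∈ [0,1] define c_t = (u_t)_# γ where u_t(x,y) = (1−t)x + ty. Then for all 0 ≤ s ≤ t ≤ 1, W₂(c_s, c_t) ≤ (t − s)·W₂(μ₀, μ₁). -/
open MeasureTheory

/-- The squared Wasserstein distance of order 2: the infimum of `∫ d(x,y)² dπ` over all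
couplings `π` of `μ` and `ν`. -/
noncomputable def W2sq {X : Type*} [MeasurableSpace X] [PseudoMetricSpace X]
    (μ ν : Measure X) : ℝ :=
  sInf {r : ℝ | ∃ π : Measure (X × X), π.map Prod.fst = μ ∧ π.map Prod.snd = ν ∧
    r = ∫ p, dist p.1 p.2 ^ 2 ∂π}

/-- The Wasserstein distance of order 2. -/
noncomputable def W2 {X : Type*} [MeasurableSpace X] [PseudoMetricSpace X]
    (μ ν : Measure X) : ℝ :=
  Real.sqrt (W2sq μ ν)

/-- Displacement interpolation in `ℝ^m`: if `γ` is an optimal coupling of `μ₀` and `μ₁`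
and `c_t = (u_t)_#γ` with `u_t(x,y) = (1−t)x + ty`, then
`W₂(c_s, c_t) ≤ (t−s)·W₂(μ₀, μ₁)` for `0 ≤ s ≤ t ≤ 1`. -/
theorem stmt3 {m : ℕ}
    (μ₀ μ₁ : Measure (EuclideanSpace ℝ (Fin m)))
    [IsProbabilityMeasure μ₀] [IsProbabilityMeasure μ₁]
    (hm₀ : MemLp (fun x : EuclideanSpace ℝ (Fin m) => x) 2 μ₀)
    (hm₁ : MemLp (fun x : EuclideanSpace ℝ (Fin m) => x) 2 μ₁)
    (γ : Measure (EuclideanSpace ℝ (Fin m) × EuclideanSpace ℝ (Fin m)))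
    (hγ₁ : γ.map Prod.fst = μ₀) (hγ₂ : γ.map Prod.snd = μ₁)
    (hopt : ∫ p, dist p.1 p.2 ^ 2 ∂γ = W2sq μ₀ μ₁)
    (c : ℝ → Measure (EuclideanSpace ℝ (Fin m)))
    (hc : ∀ t : ℝ, c t = γ.map (fun p => (1 - t) • p.1 + t • p.2)) :
    ∀ s t : ℝ, 0 ≤ s → s ≤ t → t ≤ 1 →
      W2 (c s) (c t) ≤ (t - s) * W2 μ₀ μ₁ := by
  intro s t hs hst ht
  set E := EuclideanSpace ℝ (Fin m)
  have hu : ∀ r : ℝ, Measurable (fun p : E × E => (1 - r) • p.1 + r • p.2) := by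
    intro r
    fun_prop
  set f : E × E → E × E := fun p =>
    ((1 - s) • p.1 + s • p.2, (1 - t) • p.1 + t • p.2) with hf
  have hfmeas : Measurable f := (hu s).prodMk (hu t)
  set π : Measure (E × E) := γ.map f with hπ
  have h1 : π.map Prod.fst = c s := by
    rw [hπ, Measure.map_map measurable_fst hfmeas, hc s]; rfl
  have h2 : π.map Prod.snd = c t := by
    rw [hπ, Measure.map_map measurable_snd hfmeas, hc t]; rfl
  -- the cost of π
  have hdist : ∀ p : E × E, dist (f p).1 (f p).2 = (t - s) * dist p.1 p.2 := by
    intro p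
    have : (f p).1 - (f p).2 = (t - s) • (p.1 - p.2) := by
      simp only [hf]
      rw [smul_sub]
      module
    rw [dist_eq_norm, this, norm_smul, dist_eq_norm, Real.norm_eq_abs,
      abs_of_nonneg (by linarith)]
  have hcost : ∫ p, dist p.1 p.2 ^ 2 ∂π = (t - s) ^ 2 * W2sq μ₀ μ₁ := by
    have hasm : AEStronglyMeasurable (fun p : E × E => dist p.1 p.2 ^ 2) (γ.map f) :=
      Continuous.aestronglyMeasurable (by fun_prop)
    rw [hπ, integral_map hfmeas.aemeasurable hasm]
    simp only [hdist]
    rw [← hopt, ← integral_const_mul]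
    congr 1
    ext p
    ring
  -- W2sq (c s) (c t) ≤ cost of π
  have hbdd : BddBelow {r : ℝ | ∃ π : Measure (E × E), π.map Prod.fst = c s ∧
      π.map Prod.snd = c t ∧ r = ∫ p, dist p.1 p.2 ^ 2 ∂π} := by
    refine ⟨0, ?_⟩
    rintro r ⟨π', -, -, rfl⟩
    exact integral_nonneg fun p => sq_nonneg _
  have hle : W2sq (c s) (c t) ≤ (t - s) ^ 2 * W2sq μ₀ μ₁ :=
    csInf_le hbdd ⟨π, h1, h2, hcost.symm⟩
  have : W2 (c s) (c t) ≤ Real.sqrt ((t - s) ^ 2 * W2sq μ₀ μ₁) :=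
    Real.sqrt_le_sqrt hle
  calc W2 (c s) (c t) ≤ Real.sqrt ((t - s) ^ 2 * W2sq μ₀ μ₁) := this
    _ = (t - s) * W2 μ₀ μ₁ := by
        rw [Real.sqrt_mul (sq_nonneg _), Real.sqrt_sq (by linarith)]; rfl
end

section
/- Let μ₀, μ₁ be Borel probability measures on ℝ^m with finite second moments, and let γ be an optimal coupling of μ₀ and μ₁, i.e. a coupling with ∫ |x − y|² dγ(x,y) = W₂²(μ₀, μ₁). For t ∈ [0,1] define c_t = (u_t)_# γ where u_t(x,y) = (1−t)x + ty. Then the curve t ↦ c_t is a geodesic of constant speed: W₂(c_s, c_t) = |t − s|·W₂(μ₀, μ₁) for all s, t ∈ [0,1]. -/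
open MeasureTheory

namespace W2Aux

open ProbabilityTheory

section General

variable {X : Type*} [MeasurableSpace X] [PseudoMetricSpace X]

/-- The set of transport costs of couplings. -/
def CSet (μ ν : Measure X) : Set ℝ :=
  {r : ℝ | ∃ π : Measure (X × X), π.map Prod.fst = μ ∧ π.map Prod.snd = ν ∧
    r = ∫ p, dist p.1 p.2 ^ 2 ∂π}

lemma w2sq_eq (μ ν : Measure X) : W2sq μ ν = sInf (CSet μ ν) := rfl

omit [PseudoMetricSpace X] in
lemma coupling_isProb {μ : Measure X} [IsProbabilityMeasure μ]
    {π : Measure (X × X)} (h : π.map Prod.fst = μ) : IsProbabilityMeasure π := by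
  constructor
  have := congrArg (fun m : Measure X => m Set.univ) h
  simpa [Measure.map_apply measurable_fst MeasurableSet.univ] using this

lemma cset_nonempty (μ ν : Measure X) [IsProbabilityMeasure μ] [IsProbabilityMeasure ν] :
    (CSet μ ν).Nonempty :=
  ⟨_, μ.prod ν, Measure.fst_prod, Measure.snd_prod, rfl⟩

lemma cset_bddBelow (μ ν : Measure X) : BddBelow (CSet μ ν) := by
  refine ⟨0, fun r hr => ?_⟩
  obtain ⟨π, -, -, rfl⟩ := hr
  exact integral_nonneg fun p => sq_nonneg _

lemma W2sq_le_cost {μ ν : Measure X} {π : Measure (X × X)}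
    (h1 : π.map Prod.fst = μ) (h2 : π.map Prod.snd = ν) :
    W2sq μ ν ≤ ∫ p, dist p.1 p.2 ^ 2 ∂π :=
  csInf_le (cset_bddBelow μ ν) ⟨π, h1, h2, rfl⟩

lemma W2sq_nonneg (μ ν : Measure X) [IsProbabilityMeasure μ] [IsProbabilityMeasure ν] :
    0 ≤ W2sq μ ν :=
  le_csInf (cset_nonempty μ ν) fun r hr => by
    obtain ⟨π, -, -, rfl⟩ := hr; exact integral_nonneg fun p => sq_nonneg _

lemma W2_nonneg (μ ν : Measure X) : 0 ≤ W2 μ ν := Real.sqrt_nonneg _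

lemma exists_coupling_lt (μ ν : Measure X) [IsProbabilityMeasure μ] [IsProbabilityMeasure ν]
    {ε : ℝ} (hε : 0 < ε) :
    ∃ π : Measure (X × X), π.map Prod.fst = μ ∧ π.map Prod.snd = ν ∧
      ∫ p, dist p.1 p.2 ^ 2 ∂π < W2sq μ ν + ε := by
  obtain ⟨r, hr, hlt⟩ := Real.lt_sInf_add_pos (cset_nonempty μ ν) hε
  obtain ⟨π, h1, h2, rfl⟩ := hr
  exact ⟨π, h1, h2, hlt⟩

variable [SecondCountableTopology X] [OpensMeasurableSpace X]

lemma distSq_aesm (π : Measure (X × X)) :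
    AEStronglyMeasurable (fun p : X × X => dist p.1 p.2 ^ 2) π :=
  ((continuous_dist.comp (continuous_fst.prodMk continuous_snd)).pow 2).aestronglyMeasurable

lemma W2sq_comm (μ ν : Measure X) [IsProbabilityMeasure μ] [IsProbabilityMeasure ν] :
    W2sq μ ν = W2sq ν μ := by
  have key : ∀ (a b : Measure X), CSet a b ⊆ CSet b a := by
    rintro a b r ⟨π, h1, h2, rfl⟩
    refine ⟨π.map Prod.swap, ?_, ?_, ?_⟩
    · rw [Measure.map_map measurable_fst measurable_swap]; exact h2
    · rw [Measure.map_map measurable_snd measurable_swap]; exact h1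
    · rw [integral_map measurable_swap.aemeasurable]
      · simp [dist_comm]
      · exact distSq_aesm _
  rw [w2sq_eq, w2sq_eq]
  exact le_antisymm
    (csInf_le_csInf (cset_bddBelow _ _) (cset_nonempty ν μ) (key ν μ))
    (csInf_le_csInf (cset_bddBelow _ _) (cset_nonempty μ ν) (key μ ν))

lemma W2_comm (μ ν : Measure X) [IsProbabilityMeasure μ] [IsProbabilityMeasure ν] :
    W2 μ ν = W2 ν μ := by rw [W2, W2, W2sq_comm]

end General

section Euclidean

variable {m : ℕ}
local notation "E" => EuclideanSpace ℝ (Fin m)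

lemma memℒp_fst {μ : Measure E} (hμ : MemLp (fun x : E => x) 2 μ)
    {π : Measure (E × E)} (hπ : π.map Prod.fst = μ) :
    MemLp (fun p : E × E => p.1) 2 π := by
  have h : MemLp (fun x : E => x) 2 (π.map Prod.fst) := hπ ▸ hμ
  exact (memLp_map_measure_iff (by rw [hπ]; exact hμ.1) measurable_fst.aemeasurable).mp h

lemma memℒp_snd {μ : Measure E} (hμ : MemLp (fun x : E => x) 2 μ)
    {π : Measure (E × E)} (hπ : π.map Prod.snd = μ) :
    MemLp (fun p : E × E => p.2) 2 π := by
  have h : MemLp (fun x : E => x) 2 (π.map Prod.snd) := hπ ▸ hμ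
  exact (memLp_map_measure_iff (by rw [hπ]; exact hμ.1) measurable_snd.aemeasurable).mp h

lemma memℒp_dist {μ ν : Measure E} (hμ : MemLp (fun x : E => x) 2 μ)
    (hν : MemLp (fun x : E => x) 2 ν)
    {π : Measure (E × E)} (h1 : π.map Prod.fst = μ) (h2 : π.map Prod.snd = ν) :
    MemLp (fun p : E × E => dist p.1 p.2) 2 π := by
  have h := ((memℒp_fst hμ h1).sub (memℒp_snd hν h2)).norm
  simpa [dist_eq_norm] using h

lemma cost_integrable {μ ν : Measure E} (hμ : MemLp (fun x : E => x) 2 μ)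
    (hν : MemLp (fun x : E => x) 2 ν)
    {π : Measure (E × E)} (h1 : π.map Prod.fst = μ) (h2 : π.map Prod.snd = ν) :
    Integrable (fun p : E × E => dist p.1 p.2 ^ 2) π :=
  (memLp_two_iff_integrable_sq
    (continuous_dist.comp (continuous_fst.prodMk continuous_snd)).aestronglyMeasurable).mp
    (memℒp_dist hμ hν h1 h2)

lemma map_compProd_prod_left (ν : Measure E) [IsProbabilityMeasure ν]
    (κ₁ κ₂ : Kernel E E) [IsMarkovKernel κ₁] [IsMarkovKernel κ₂] :
    (ν ⊗ₘ (κ₁ ×ₖ κ₂)).map (fun p : E × (E × E) => (p.1, p.2.1)) = ν ⊗ₘ κ₁ := by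
  ext s hs
  rw [Measure.map_apply (measurable_fst.prodMk (measurable_snd.fst)) hs,
    Measure.compProd_apply ((measurable_fst.prodMk (measurable_snd.fst)) hs),
    Measure.compProd_apply hs]
  refine lintegral_congr fun x => ?_
  have hset : Prod.mk x ⁻¹' ((fun p : E × (E × E) => (p.1, p.2.1)) ⁻¹' s)
      = Prod.fst ⁻¹' (Prod.mk x ⁻¹' s) := rfl
  rw [hset, Kernel.prod_apply, ← Set.prod_univ, Measure.prod_prod, measure_univ, mul_one]

lemma map_compProd_prod_right (ν : Measure E) [IsProbabilityMeasure ν]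
    (κ₁ κ₂ : Kernel E E) [IsMarkovKernel κ₁] [IsMarkovKernel κ₂] :
    (ν ⊗ₘ (κ₁ ×ₖ κ₂)).map (fun p : E × (E × E) => (p.1, p.2.2)) = ν ⊗ₘ κ₂ := by
  ext s hs
  rw [Measure.map_apply (measurable_fst.prodMk (measurable_snd.snd)) hs,
    Measure.compProd_apply ((measurable_fst.prodMk (measurable_snd.snd)) hs),
    Measure.compProd_apply hs]
  refine lintegral_congr fun x => ?_
  have hset : Prod.mk x ⁻¹' ((fun p : E × (E × E) => (p.1, p.2.2)) ⁻¹' s)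
      = Prod.snd ⁻¹' (Prod.mk x ⁻¹' s) := rfl
  rw [hset, Kernel.prod_apply, ← Set.univ_prod, Measure.prod_prod, measure_univ, one_mul]

/-- The gluing lemma: given couplings `π₁` of `(ν₁, ν₂)` and `π₂` of `(ν₂, ν₃)`, there is a
coupling of `(ν₁, ν₃)` whose cost satisfies the Minkowski-type bound. -/
lemma glue {ν₁ ν₂ ν₃ : Measure E}
    [IsProbabilityMeasure ν₁] [IsProbabilityMeasure ν₂] [IsProbabilityMeasure ν₃]
    (h₁ : MemLp (fun x : E => x) 2 ν₁) (h₂ : MemLp (fun x : E => x) 2 ν₂)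
    (h₃ : MemLp (fun x : E => x) 2 ν₃)
    {π₁ π₂ : Measure (E × E)}
    (ha₁ : π₁.map Prod.fst = ν₁) (ha₂ : π₁.map Prod.snd = ν₂)
    (hb₁ : π₂.map Prod.fst = ν₂) (hb₂ : π₂.map Prod.snd = ν₃) :
    ∃ π₃ : Measure (E × E), π₃.map Prod.fst = ν₁ ∧ π₃.map Prod.snd = ν₃ ∧
      ∫ p, dist p.1 p.2 ^ 2 ∂π₃ ≤
        (Real.sqrt (∫ p, dist p.1 p.2 ^ 2 ∂π₁) + Real.sqrt (∫ p, dist p.1 p.2 ^ 2 ∂π₂)) ^ 2 := by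
  haveI : IsProbabilityMeasure π₁ := coupling_isProb ha₁
  haveI : IsProbabilityMeasure π₂ := coupling_isProb hb₁
  set η : Measure (E × E) := π₁.map Prod.swap with hη
  haveI : IsProbabilityMeasure η := Measure.isProbabilityMeasure_map measurable_swap.aemeasurable
  have hηfst : η.fst = ν₂ := by
    rw [hη, Measure.fst, Measure.map_map measurable_fst measurable_swap]
    exact ha₂
  have hπ₂fst : π₂.fst = ν₂ := hb₁
  set κ₁ := η.condKernel with hκ₁
  set κ₂ := π₂.condKernel with hκ₂
  have hd₁ : ν₂ ⊗ₘ κ₁ = η := by rw [← hηfst]; exact η.disintegrate _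
  have hd₂ : ν₂ ⊗ₘ κ₂ = π₂ := by rw [← hπ₂fst]; exact π₂.disintegrate _
  set μ : Measure (E × (E × E)) := ν₂ ⊗ₘ (κ₁ ×ₖ κ₂) with hμdef
  -- marginal identities
  have hA : μ.map (fun p : E × (E × E) => (p.1, p.2.1)) = η := by
    rw [hμdef, map_compProd_prod_left, hd₁]
  have hB : μ.map (fun p : E × (E × E) => (p.1, p.2.2)) = π₂ := by
    rw [hμdef, map_compProd_prod_right, hd₂]
  have hA' : μ.map (fun p : E × (E × E) => (p.2.1, p.1)) = π₁ := by
    have hcomp : (Prod.swap ∘ fun p : E × (E × E) => (p.1, p.2.1))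
        = fun p : E × (E × E) => (p.2.1, p.1) := rfl
    rw [← hcomp, ← Measure.map_map measurable_swap
      (measurable_fst.prodMk measurable_snd.fst), hA, hη,
      Measure.map_map measurable_swap measurable_swap]
    simp [Prod.swap_swap_eq]
  -- the glued coupling
  refine ⟨μ.map (fun p : E × (E × E) => (p.2.1, p.2.2)), ?_, ?_, ?_⟩
  · have hcomp : (Prod.fst ∘ fun p : E × (E × E) => (p.2.1, p.2.2))
        = (Prod.fst ∘ fun p : E × (E × E) => (p.2.1, p.1)) := rfl
    rw [Measure.map_map measurable_fst (measurable_snd.fst.prodMk measurable_snd.snd),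
      hcomp, ← Measure.map_map measurable_fst (measurable_snd.fst.prodMk measurable_fst),
      hA', ha₁]
  · have hcomp : (Prod.snd ∘ fun p : E × (E × E) => (p.2.1, p.2.2))
        = (Prod.snd ∘ fun p : E × (E × E) => (p.1, p.2.2)) := rfl
    rw [Measure.map_map measurable_snd (measurable_snd.fst.prodMk measurable_snd.snd),
      hcomp, ← Measure.map_map measurable_snd (measurable_fst.prodMk measurable_snd.snd),
      hB, hb₂]
  -- the cost estimate
  set F : E × (E × E) → ℝ := fun p => dist p.2.1 p.1 with hF
  set G : E × (E × E) → ℝ := fun p => dist p.1 p.2.2 with hG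
  set H : E × (E × E) → ℝ := fun p => dist p.2.1 p.2.2 with hH
  have hFc : Continuous F := continuous_dist.comp
    ((continuous_snd.fst).prodMk continuous_fst)
  have hGc : Continuous G := continuous_dist.comp
    (continuous_fst.prodMk (continuous_snd.snd))
  have hHc : Continuous H := continuous_dist.comp
    ((continuous_snd.fst).prodMk (continuous_snd.snd))
  -- MemLp facts via the marginal identities
  have hdist₁ : MemLp (fun q : E × E => dist q.1 q.2) 2 π₁ := memℒp_dist h₁ h₂ ha₁ ha₂
  have hdist₂ : MemLp (fun q : E × E => dist q.1 q.2) 2 π₂ := memℒp_dist h₂ h₃ hb₁ hb₂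
  have hFmem : MemLp F 2 μ := by
    have := (memLp_map_measure_iff
      (g := fun q : E × E => dist q.1 q.2)
      (by rw [hA']; exact (continuous_dist.comp
        (continuous_fst.prodMk continuous_snd)).aestronglyMeasurable)
      (measurable_snd.fst.prodMk measurable_fst).aemeasurable).mp (by rw [hA']; exact hdist₁)
    exact this
  have hGmem : MemLp G 2 μ := by
    have := (memLp_map_measure_iff
      (g := fun q : E × E => dist q.1 q.2)
      (by rw [hB]; exact (continuous_dist.comp
        (continuous_fst.prodMk continuous_snd)).aestronglyMeasurable)
      (measurable_fst.prodMk measurable_snd.snd).aemeasurable).mp (by rw [hB]; exact hdist₂)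
    exact this
  have hHle : ∀ p, H p ≤ F p + G p := fun p => dist_triangle _ _ _
  have hHmem : MemLp H 2 μ := by
    refine MemLp.of_le (hFmem.add hGmem) hHc.aestronglyMeasurable ?_
    filter_upwards with p
    rw [Real.norm_of_nonneg dist_nonneg]
    refine (hHle p).trans (le_abs_self _)
  -- integrability of the squares
  have hF2int : Integrable (fun p => F p ^ 2) μ :=
    (memLp_two_iff_integrable_sq hFc.aestronglyMeasurable).mp hFmem
  have hG2int : Integrable (fun p => G p ^ 2) μ :=
    (memLp_two_iff_integrable_sq hGc.aestronglyMeasurable).mp hGmem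
  have hH2int : Integrable (fun p => H p ^ 2) μ :=
    (memLp_two_iff_integrable_sq hHc.aestronglyMeasurable).mp hHmem
  have hFG2int : Integrable (fun p => (F p + G p) ^ 2) μ :=
    (memLp_two_iff_integrable_sq (hFc.add hGc).aestronglyMeasurable).mp (hFmem.add hGmem)
  have hFGint : Integrable (fun p => F p * G p) μ := by
    have hsm : MemLp (F • G) 1 μ := by
      haveI : ENNReal.HolderTriple 2 2 1 := ⟨by rw [ENNReal.inv_two_add_inv_two, inv_one]⟩
      exact MemLp.smul (φ := F) (f := G) hGmem hFmem
    exact memLp_one_iff_integrable.mp hsm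
  -- transfer of integrals
  have hF2 : ∫ q : E × E, dist q.1 q.2 ^ 2 ∂π₁ = ∫ p, F p ^ 2 ∂μ := by
    rw [← hA', integral_map (measurable_snd.fst.prodMk measurable_fst).aemeasurable
      (by rw [hA']; exact distSq_aesm π₁)]
  have hG2 : ∫ q : E × E, dist q.1 q.2 ^ 2 ∂π₂ = ∫ p, G p ^ 2 ∂μ := by
    rw [← hB, integral_map (measurable_fst.prodMk measurable_snd.snd).aemeasurable
      (by rw [hB]; exact distSq_aesm π₂)]
  have hH2 : ∫ q : E × E, dist q.1 q.2 ^ 2 ∂(μ.map (fun p : E × (E × E) => (p.2.1, p.2.2)))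
      = ∫ p, H p ^ 2 ∂μ := by
    rw [integral_map (measurable_snd.fst.prodMk measurable_snd.snd).aemeasurable
      (distSq_aesm _)]
  rw [hH2, hF2, hG2]
  -- Cauchy–Schwarz
  have hIF : 0 ≤ ∫ p, F p ^ 2 ∂μ := integral_nonneg fun p => sq_nonneg _
  have hIG : 0 ≤ ∫ p, G p ^ 2 ∂μ := integral_nonneg fun p => sq_nonneg _
  have hCS : ∫ p, F p * G p ∂μ ≤
      Real.sqrt (∫ p, F p ^ 2 ∂μ) * Real.sqrt (∫ p, G p ^ 2 ∂μ) := by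
    have hconj : Real.HolderConjugate 2 2 := Real.HolderConjugate.two_two
    have h := integral_mul_le_Lp_mul_Lq_of_nonneg hconj
      (Filter.Eventually.of_forall fun p => (dist_nonneg : (0:ℝ) ≤ F p))
      (Filter.Eventually.of_forall fun p => (dist_nonneg : (0:ℝ) ≤ G p))
      (by simpa using hFmem) (by simpa using hGmem)
    have h2F : ∫ p, F p ^ (2:ℝ) ∂μ = ∫ p, F p ^ 2 ∂μ :=
      integral_congr_ae (Filter.Eventually.of_forall fun p => Real.rpow_two _)
    have h2G : ∫ p, G p ^ (2:ℝ) ∂μ = ∫ p, G p ^ 2 ∂μ :=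
      integral_congr_ae (Filter.Eventually.of_forall fun p => Real.rpow_two _)
    rw [h2F, h2G] at h
    rw [Real.sqrt_eq_rpow, Real.sqrt_eq_rpow]
    convert h using 3 <;> norm_num
  -- expansion and conclusion
  have hmono : ∫ p, H p ^ 2 ∂μ ≤ ∫ p, (F p + G p) ^ 2 ∂μ := by
    refine integral_mono hH2int hFG2int fun p => ?_
    have h0 : (0:ℝ) ≤ H p := dist_nonneg
    nlinarith [hHle p, dist_nonneg (x := p.1) (y := p.2.2), dist_nonneg (x := p.2.1) (y := p.1)]
  have hexp : ∫ p, (F p + G p) ^ 2 ∂μ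
      = ∫ p, F p ^ 2 ∂μ + (2 * ∫ p, F p * G p ∂μ + ∫ p, G p ^ 2 ∂μ) := by
    have e1 : ∀ p : E × (E × E), (F p + G p) ^ 2
        = F p ^ 2 + (2 * (F p * G p) + G p ^ 2) := fun p => by ring
    calc ∫ p, (F p + G p) ^ 2 ∂μ
        = ∫ p, F p ^ 2 + (2 * (F p * G p) + G p ^ 2) ∂μ := by simp_rw [e1]
      _ = ∫ p, F p ^ 2 ∂μ + ∫ p, 2 * (F p * G p) + G p ^ 2 ∂μ :=
          integral_add hF2int ((hFGint.const_mul 2).add hG2int)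
      _ = ∫ p, F p ^ 2 ∂μ + (∫ p, 2 * (F p * G p) ∂μ + ∫ p, G p ^ 2 ∂μ) := by
          rw [integral_add (hFGint.const_mul 2) hG2int]
      _ = ∫ p, F p ^ 2 ∂μ + (2 * ∫ p, F p * G p ∂μ + ∫ p, G p ^ 2 ∂μ) := by
          rw [integral_const_mul]
  have hsq : (Real.sqrt (∫ p, F p ^ 2 ∂μ) + Real.sqrt (∫ p, G p ^ 2 ∂μ)) ^ 2
      = ∫ p, F p ^ 2 ∂μ + (2 * (Real.sqrt (∫ p, F p ^ 2 ∂μ) * Real.sqrt (∫ p, G p ^ 2 ∂μ))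
        + ∫ p, G p ^ 2 ∂μ) := by
    rw [add_sq, Real.sq_sqrt hIF, Real.sq_sqrt hIG]
    ring
  rw [hsq]
  calc ∫ p, H p ^ 2 ∂μ ≤ ∫ p, (F p + G p) ^ 2 ∂μ := hmono
    _ = ∫ p, F p ^ 2 ∂μ + (2 * ∫ p, F p * G p ∂μ + ∫ p, G p ^ 2 ∂μ) := hexp
    _ ≤ _ := by nlinarith [hCS]

/-- Triangle inequality for `W2` on Euclidean space. -/
lemma W2_triangle (ν₁ ν₂ ν₃ : Measure E)
    [IsProbabilityMeasure ν₁] [IsProbabilityMeasure ν₂] [IsProbabilityMeasure ν₃]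
    (h₁ : MemLp (fun x : E => x) 2 ν₁) (h₂ : MemLp (fun x : E => x) 2 ν₂)
    (h₃ : MemLp (fun x : E => x) 2 ν₃) :
    W2 ν₁ ν₃ ≤ W2 ν₁ ν₂ + W2 ν₂ ν₃ := by
  have key : ∀ ε > (0:ℝ), W2sq ν₁ ν₃ ≤
      (Real.sqrt (W2sq ν₁ ν₂ + ε) + Real.sqrt (W2sq ν₂ ν₃ + ε)) ^ 2 := by
    intro ε hε
    obtain ⟨π₁, ha₁, ha₂, hlt₁⟩ := exists_coupling_lt ν₁ ν₂ hε
    obtain ⟨π₂, hb₁, hb₂, hlt₂⟩ := exists_coupling_lt ν₂ ν₃ hε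
    obtain ⟨π₃, hc₁, hc₂, hcost⟩ := glue h₁ h₂ h₃ ha₁ ha₂ hb₁ hb₂
    refine (W2sq_le_cost hc₁ hc₂).trans (hcost.trans ?_)
    have s1 : Real.sqrt (∫ p, dist p.1 p.2 ^ 2 ∂π₁) ≤ Real.sqrt (W2sq ν₁ ν₂ + ε) :=
      Real.sqrt_le_sqrt hlt₁.le
    have s2 : Real.sqrt (∫ p, dist p.1 p.2 ^ 2 ∂π₂) ≤ Real.sqrt (W2sq ν₂ ν₃ + ε) :=
      Real.sqrt_le_sqrt hlt₂.le
    exact pow_le_pow_left₀ (by positivity) (add_le_add s1 s2) 2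
  have hW13 : W2sq ν₁ ν₃ ≤ (Real.sqrt (W2sq ν₁ ν₂) + Real.sqrt (W2sq ν₂ ν₃)) ^ 2 := by
    have hcont : Continuous fun ε : ℝ =>
        (Real.sqrt (W2sq ν₁ ν₂ + ε) + Real.sqrt (W2sq ν₂ ν₃ + ε)) ^ 2 := by
      exact ((Real.continuous_sqrt.comp (continuous_const.add continuous_id)).add
        (Real.continuous_sqrt.comp (continuous_const.add continuous_id))).pow 2
    have htend : Filter.Tendsto
        (fun ε : ℝ => (Real.sqrt (W2sq ν₁ ν₂ + ε) + Real.sqrt (W2sq ν₂ ν₃ + ε)) ^ 2)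
        (nhdsWithin 0 (Set.Ioi 0))
        (nhds ((Real.sqrt (W2sq ν₁ ν₂) + Real.sqrt (W2sq ν₂ ν₃)) ^ 2)) := by
      have := (hcont.tendsto 0).mono_left (nhdsWithin_le_nhds (s := Set.Ioi (0:ℝ)))
      simpa using this
    refine ge_of_tendsto htend ?_
    filter_upwards [self_mem_nhdsWithin] with ε hε using key ε hε
  calc W2 ν₁ ν₃ = Real.sqrt (W2sq ν₁ ν₃) := rfl
    _ ≤ Real.sqrt ((Real.sqrt (W2sq ν₁ ν₂) + Real.sqrt (W2sq ν₂ ν₃)) ^ 2) :=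
        Real.sqrt_le_sqrt hW13
    _ = Real.sqrt (W2sq ν₁ ν₂) + Real.sqrt (W2sq ν₂ ν₃) := by
        rw [Real.sqrt_sq (by positivity)]
    _ = W2 ν₁ ν₂ + W2 ν₂ ν₃ := rfl

end Euclidean

end W2Aux

/-- Displacement interpolation in `ℝ^m`: if `γ` is an optimal coupling of `μ₀` and `μ₁`
and `c_t = (u_t)_#γ` with `u_t(x,y) = (1−t)x + ty`, then `t ↦ c_t` is a geodesic of
constant speed: `W₂(c_s, c_t) = |t−s|·W₂(μ₀, μ₁)` for all `s, t ∈ [0,1]`. -/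
theorem stmt4 {m : ℕ}
    (μ₀ μ₁ : Measure (EuclideanSpace ℝ (Fin m)))
    [IsProbabilityMeasure μ₀] [IsProbabilityMeasure μ₁]
    (hm₀ : MemLp (fun x : EuclideanSpace ℝ (Fin m) => x) 2 μ₀)
    (hm₁ : MemLp (fun x : EuclideanSpace ℝ (Fin m) => x) 2 μ₁)
    (γ : Measure (EuclideanSpace ℝ (Fin m) × EuclideanSpace ℝ (Fin m)))
    (hγ₁ : γ.map Prod.fst = μ₀) (hγ₂ : γ.map Prod.snd = μ₁)
    (hopt : ∫ p, dist p.1 p.2 ^ 2 ∂γ = W2sq μ₀ μ₁)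
    (c : ℝ → Measure (EuclideanSpace ℝ (Fin m)))
    (hc : ∀ t : ℝ, c t = γ.map (fun p => (1 - t) • p.1 + t • p.2)) :
    ∀ s ∈ Set.Icc (0:ℝ) 1, ∀ t ∈ Set.Icc (0:ℝ) 1,
      W2 (c s) (c t) = |t - s| * W2 μ₀ μ₁ := by
  classical
  set E := EuclideanSpace ℝ (Fin m)
  open W2Aux in
  haveI hγprob : IsProbabilityMeasure γ := W2Aux.coupling_isProb hγ₁
  have hmeas : ∀ r : ℝ, Measurable (fun p : E × E => (1 - r) • p.1 + r • p.2) := fun r =>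
    (measurable_fst.const_smul (1 - r)).add (measurable_snd.const_smul r)
  have hprob : ∀ r : ℝ, IsProbabilityMeasure (c r) := fun r => by
    rw [hc r]; exact Measure.isProbabilityMeasure_map (hmeas r).aemeasurable
  have hmom : ∀ r : ℝ, MemLp (fun x : E => x) 2 (c r) := fun r => by
    rw [hc r]
    refine (memLp_map_measure_iff aestronglyMeasurable_id (hmeas r).aemeasurable).mpr ?_
    have h := ((W2Aux.memℒp_fst hm₀ hγ₁).const_smul (1 - r)).add
      ((W2Aux.memℒp_snd hm₁ hγ₂).const_smul r)
    exact MemLp.ae_eq (Filter.Eventually.of_forall fun p => by simp) h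
  have hc0 : c 0 = μ₀ := by
    rw [hc 0]
    simp only [sub_zero, one_smul, zero_smul, add_zero]
    exact hγ₁
  have hc1 : c 1 = μ₁ := by
    rw [hc 1]
    simp only [sub_self, one_smul, zero_smul, zero_add]
    exact hγ₂
  have hWnn : 0 ≤ W2 μ₀ μ₁ := Real.sqrt_nonneg _
  -- upper bound along the interpolation
  have upper : ∀ a b : ℝ, W2 (c a) (c b) ≤ |b - a| * W2 μ₀ μ₁ := by
    intro a b
    set q : E × E → E × E := fun p => ((1-a) • p.1 + a • p.2, (1-b) • p.1 + b • p.2) with hq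
    have hqm : Measurable q := (hmeas a).prodMk (hmeas b)
    have m1 : (γ.map q).map Prod.fst = c a := by
      rw [Measure.map_map measurable_fst hqm, hc a]; rfl
    have m2 : (γ.map q).map Prod.snd = c b := by
      rw [Measure.map_map measurable_snd hqm, hc b]; rfl
    have hcost : ∫ p, dist p.1 p.2 ^ 2 ∂(γ.map q) = (b - a) ^ 2 * W2sq μ₀ μ₁ := by
      rw [integral_map hqm.aemeasurable (W2Aux.distSq_aesm _)]
      have hpt : ∀ p : E × E, dist (q p).1 (q p).2 ^ 2 = (b - a) ^ 2 * dist p.1 p.2 ^ 2 := by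
        intro p
        have hdiff : (q p).1 - (q p).2 = (b - a) • (p.1 - p.2) := by
          simp only [hq]
          module
        rw [dist_eq_norm, hdiff, norm_smul, Real.norm_eq_abs, mul_pow, sq_abs,
          dist_eq_norm]
      simp_rw [hpt]
      rw [integral_const_mul, hopt]
    calc W2 (c a) (c b) = Real.sqrt (W2sq (c a) (c b)) := rfl
      _ ≤ Real.sqrt ((b - a) ^ 2 * W2sq μ₀ μ₁) := by
          refine Real.sqrt_le_sqrt ?_
          rw [← hcost]; exact W2Aux.W2sq_le_cost m1 m2
      _ = |b - a| * W2 μ₀ μ₁ := by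
          rw [Real.sqrt_mul (sq_nonneg _), Real.sqrt_sq_eq_abs]; rfl
  -- the key computation for `a ≤ b`
  have key : ∀ a ∈ Set.Icc (0:ℝ) 1, ∀ b ∈ Set.Icc (0:ℝ) 1, a ≤ b →
      W2 (c a) (c b) = (b - a) * W2 μ₀ μ₁ := by
    intro a ha b hb hab
    haveI := hprob a; haveI := hprob b
    have t1 : W2 μ₀ μ₁ ≤ W2 μ₀ (c a) + W2 (c a) μ₁ :=
      W2Aux.W2_triangle μ₀ (c a) μ₁ hm₀ (hmom a) hm₁
    have t2 : W2 (c a) μ₁ ≤ W2 (c a) (c b) + W2 (c b) μ₁ :=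
      W2Aux.W2_triangle (c a) (c b) μ₁ (hmom a) (hmom b) hm₁
    have u1 : W2 μ₀ (c a) ≤ a * W2 μ₀ μ₁ := by
      have h := upper 0 a
      rw [hc0, sub_zero, abs_of_nonneg ha.1] at h
      exact h
    have u2 : W2 (c b) μ₁ ≤ (1 - b) * W2 μ₀ μ₁ := by
      have h := upper b 1
      rw [hc1, abs_of_nonneg (by linarith [hb.2])] at h
      exact h
    have up : W2 (c a) (c b) ≤ (b - a) * W2 μ₀ μ₁ := by
      have h := upper a b
      rw [abs_of_nonneg (sub_nonneg.mpr hab)] at h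
      exact h
    have low : (b - a) * W2 μ₀ μ₁ ≤ W2 (c a) (c b) := by nlinarith
    linarith
  intro s hs t ht
  rcases le_total s t with h | h
  · rw [key s hs t ht h, abs_of_nonneg (sub_nonneg.mpr h)]
  · haveI := hprob s; haveI := hprob t
    rw [W2Aux.W2_comm, key t ht s hs h, abs_sub_comm, abs_of_nonneg (sub_nonneg.mpr h)]
end

section
/- Let ψ : ℝ^m → ℝ be of class C² with bounded gradient and bounded Hessian, and let (U_t)_{t∈ℝ} be the flow of ∇ψ. Let μ be a Borel probability measure on ℝ^m, c_t = (U_t)_#μ, and let φ₁, …, φ_k : ℝ^m → ℝ be bounded C¹ functions with bounded gradients. Define F(ν) = ∏_{i=1}^k ∫ φ_i dν. Then t ↦ F(c_t) is differentiable at t = 0 and (d/dt) F(c_t)|_{t=0} = ∑_{i=1}^k ( ∏_{j≠i} ∫ φ_j dμ ) · ∫ ⟨∇φ_i, ∇ψ⟩ dμ. -/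
open MeasureTheory RealInnerProductSpace

/-- Derivative of a polynomial `F(ν) = ∏ᵢ ∫φᵢ dν` on Wasserstein space along the flow
of a constant vector field `V_ψ`: with `c_t = (U_t)_#μ` the flow of `∇ψ`,
`(d/dt)F(c_t)|_{t=0} = ∑ᵢ (∏_{j≠i} ∫φⱼ dμ)·∫⟨∇φᵢ, ∇ψ⟩ dμ`. -/
theorem stmt15 {m : ℕ} (ψ : EuclideanSpace ℝ (Fin m) → ℝ) (hψ : ContDiff ℝ 2 ψ)
    (K₁ K₂ : ℝ) (hgrad : ∀ x, ‖gradient ψ x‖ ≤ K₁)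
    (hhess : ∀ x, ‖fderiv ℝ (gradient ψ) x‖ ≤ K₂)
    (U : ℝ → EuclideanSpace ℝ (Fin m) → EuclideanSpace ℝ (Fin m))
    (hU0 : ∀ x, U 0 x = x)
    (hUflow : ∀ x t, HasDerivAt (fun s => U s x) (gradient ψ (U t x)) t)
    (μ : Measure (EuclideanSpace ℝ (Fin m))) [IsProbabilityMeasure μ]
    (k : ℕ) (φ : Fin k → EuclideanSpace ℝ (Fin m) → ℝ)
    (hφ : ∀ i, ContDiff ℝ 1 (φ i)) (Kf Kg : Fin k → ℝ)
    (hφb : ∀ i x, |φ i x| ≤ Kf i) (hφg : ∀ i x, ‖gradient (φ i) x‖ ≤ Kg i) :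
    HasDerivAt (fun t => ∏ i : Fin k, ∫ x, φ i x ∂(μ.map (U t)))
      (∑ i : Fin k, (∏ j ∈ Finset.univ.erase i, ∫ x, φ j x ∂μ)
        * ∫ x, ⟪gradient (φ i) x, gradient ψ x⟫ ∂μ) 0 := by
  have hK₂0 : (0:ℝ) ≤ K₂ := le_trans (norm_nonneg _) (hhess 0)
  have hK₁0 : (0:ℝ) ≤ K₁ := le_trans (norm_nonneg _) (hgrad 0)
  -- gradient ψ is differentiable (hence continuous) and Lipschitz
  have hψ1 : ContDiff ℝ 1 (fderiv ℝ ψ) := hψ.fderiv_right (le_refl 2)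
  have hgdiff : Differentiable ℝ (gradient ψ) := by
    have : Differentiable ℝ (fun x => (InnerProductSpace.toDual ℝ (EuclideanSpace ℝ (Fin m))).symm (fderiv ℝ ψ x)) :=
      ((InnerProductSpace.toDual ℝ (EuclideanSpace ℝ (Fin m))).symm.differentiable).comp (hψ1.differentiable one_ne_zero)
    exact this
  have hgcont : Continuous (gradient ψ) := hgdiff.continuous
  have hgradφcont : ∀ i, Continuous (gradient (φ i)) := by
    intro i
    have : Continuous (fun x => (InnerProductSpace.toDual ℝ (EuclideanSpace ℝ (Fin m))).symm (fderiv ℝ (φ i) x)) :=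
      ((InnerProductSpace.toDual ℝ (EuclideanSpace ℝ (Fin m))).symm.continuous).comp ((hφ i).continuous_fderiv one_ne_zero)
    exact this
  set L : NNReal := K₂.toNNReal with hL
  have hLip : LipschitzWith L (gradient ψ) := by
    refine lipschitzWith_of_nnnorm_fderiv_le hgdiff fun x => ?_
    rw [← NNReal.coe_le_coe, coe_nnnorm, hL, Real.coe_toNNReal _ hK₂0]
    exact hhess x
  have hUcontx : ∀ a : EuclideanSpace ℝ (Fin m), Continuous (fun s => U s a) := by
    intro a
    have h : Differentiable ℝ (fun s => U s a) := fun t => (hUflow a t).differentiableAt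
    exact h.continuous
  -- Lipschitz continuity of `U t` via Grönwall
  have hULip : ∀ t x y, dist (U t x) (U t y) ≤ dist x y * Real.exp (L * |t|) := by
    intro t x y
    rcases le_or_gt 0 t with ht | ht
    · have := dist_le_of_trajectories_ODE (v := fun _ z => gradient ψ z) (K := L)
        (fun _ => hLip) ((hUcontx x).continuousOn)
        (fun s _ => (hUflow x s).hasDerivWithinAt) ((hUcontx y).continuousOn)
        (fun s _ => (hUflow y s).hasDerivWithinAt)
        (by rw [hU0, hU0] : dist (U 0 x) (U 0 y) ≤ dist x y)
        t ⟨ht, le_rfl⟩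
      simpa [abs_of_nonneg ht] using this
    · have hf' : ∀ (a : EuclideanSpace ℝ (Fin m)) (s : ℝ),
          HasDerivAt (fun r => U (-r) a) (-(gradient ψ (U (-s) a))) s := by
        intro a s
        have := (hUflow a (-s)).scomp s (hasDerivAt_neg s)
        simp only [Function.comp_def, neg_one_smul] at this
        exact this
      have := dist_le_of_trajectories_ODE (v := fun _ z => -gradient ψ z) (K := L)
        (fun _ => hLip.neg) (((hUcontx x).comp continuous_neg).continuousOn)
        (fun s _ => (hf' x s).hasDerivWithinAt)
        (((hUcontx y).comp continuous_neg).continuousOn)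
        (fun s _ => (hf' y s).hasDerivWithinAt)
        (by simp [hU0] : dist (U (-(0:ℝ)) x) (U (-(0:ℝ)) y) ≤ dist x y)
        (-t) ⟨by linarith, le_rfl⟩
      simpa [abs_of_neg ht] using this
  have hUcont : ∀ t, Continuous (U t) := by
    intro t
    refine (LipschitzWith.of_dist_le_mul (K := (Real.exp (L * |t|)).toNNReal)
      (fun x y => ?_)).continuous
    rw [Real.coe_toNNReal _ (Real.exp_nonneg _)]
    calc dist (U t x) (U t y) ≤ dist x y * Real.exp (L * |t|) := hULip t x y
    _ = Real.exp (↑L * |t|) * dist x y := mul_comm _ _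
  -- rewrite the pushforward integrals
  have hrw : (fun t => ∏ i : Fin k, ∫ x, φ i x ∂(μ.map (U t)))
      = fun t => ∏ i : Fin k, ∫ x, φ i (U t x) ∂μ := by
    funext t
    refine Finset.prod_congr rfl fun i _ => ?_
    exact integral_map (hUcont t).aemeasurable ((hφ i).continuous.aestronglyMeasurable)
  rw [hrw]
  -- chain rule along the flow
  have key : ∀ (i : Fin k) (a : EuclideanSpace ℝ (Fin m)) (t : ℝ),
      HasDerivAt (fun s => φ i (U s a))
        ⟪gradient (φ i) (U t a), gradient ψ (U t a)⟫ t := by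
    intro i a t
    have h1 : HasFDerivAt (φ i)
        (InnerProductSpace.toDual ℝ (EuclideanSpace ℝ (Fin m)) (gradient (φ i) (U t a))) (U t a) :=
      hasGradientAt_iff_hasFDerivAt.mp
        (((hφ i).differentiable one_ne_zero (U t a)).hasGradientAt)
    have := h1.comp_hasDerivAt t (hUflow a t)
    simpa only [Function.comp_def, InnerProductSpace.toDual_apply_apply] using this
  -- derivative of each factor
  have hDi : ∀ i : Fin k, HasDerivAt (fun t => ∫ x, φ i (U t x) ∂μ)
      (∫ x, ⟪gradient (φ i) x, gradient ψ x⟫ ∂μ) 0 := by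
    intro i
    have hmeasF : ∀ t : ℝ, AEStronglyMeasurable (fun a => φ i (U t a)) μ := fun t =>
      ((hφ i).continuous.comp (hUcont t)).aestronglyMeasurable
    have hmeasF' : AEStronglyMeasurable
        (fun a => ⟪gradient (φ i) (U 0 a), gradient ψ (U 0 a)⟫) μ :=
      (((hgradφcont i).comp (hUcont 0)).inner (hgcont.comp (hUcont 0))).aestronglyMeasurable
    have hint : Integrable (fun a => φ i (U 0 a)) μ := by
      refine (integrable_const (Kf i)).mono' (hmeasF 0) (Filter.Eventually.of_forall fun a => ?_)
      simpa [Real.norm_eq_abs] using hφb i (U 0 a)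
    obtain ⟨-, hD⟩ := hasDerivAt_integral_of_dominated_loc_of_deriv_le
      (F := fun t a => φ i (U t a))
      (F' := fun t a => ⟪gradient (φ i) (U t a), gradient ψ (U t a)⟫)
      (bound := fun _ => Kg i * K₁) (Metric.ball_mem_nhds 0 one_pos)
      (Filter.Eventually.of_forall hmeasF) hint hmeasF'
      (Filter.Eventually.of_forall fun a => fun t _ => by
        show ‖(⟪gradient (φ i) (U t a), gradient ψ (U t a)⟫ : ℝ)‖ ≤ Kg i * K₁
        calc ‖(⟪gradient (φ i) (U t a), gradient ψ (U t a)⟫ : ℝ)‖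
            ≤ ‖gradient (φ i) (U t a)‖ * ‖gradient ψ (U t a)‖ := norm_inner_le_norm _ _
          _ ≤ Kg i * K₁ := by
              have h1 := hφg i (U t a); have h2 := hgrad (U t a)
              nlinarith [norm_nonneg (gradient (φ i) (U t a)),
                norm_nonneg (gradient ψ (U t a))])
      (integrable_const _)
      (Filter.Eventually.of_forall fun a => fun t _ => key i a t)
    simpa [hU0] using hD
  have := HasDerivAt.fun_finsetProd (u := Finset.univ)
    (f := fun (i : Fin k) (t : ℝ) => ∫ x, φ i (U t x) ∂μ)
    (f' := fun i => ∫ x, ⟪gradient (φ i) x, gradient ψ x⟫ ∂μ)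
    (fun i _ => hDi i)
  simpa [hU0, smul_eq_mul] using this
end

section
/- Let σ and μ be compactly supported Borel probability measures on ℝ^m and let γ be an optimal coupling of σ and μ, i.e. a coupling with ∫|x−y|² dγ(x,y) = W₂²(σ, μ). Let ψ : ℝ^m → ℝ be of class C² with bounded gradient and bounded Hessian, let (U_t) be the flow of ∇ψ, and set μ_t = (U_t)_#μ. Then limsup_{t→0⁺} (W₂²(σ, μ_t) − W₂²(σ, μ))/t ≤ 2 ∫ ⟨∇ψ(y), y − x⟩ dγ(x, y). -/
open MeasureTheory RealInnerProductSpace Filter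

open Topology

section gradaux

variable {E : Type*} [NormedAddCommGroup E] [InnerProductSpace ℝ E] [CompleteSpace E]

lemma aux_grad_lipW (ψ : E → ℝ) (hψ : ContDiff ℝ 2 ψ) (K₂ : ℝ)
    (hhess : ∀ x, ‖fderiv ℝ (gradient ψ) x‖ ≤ K₂) :
    LipschitzWith K₂.toNNReal (gradient ψ) := by
  have hd : Differentiable ℝ (fderiv ℝ ψ) :=
    (hψ.fderiv_right (m := 1) (by norm_num)).differentiable one_ne_zero
  have hdg : Differentiable ℝ (gradient ψ) := by
    have : Differentiable ℝ fun x =>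
        (InnerProductSpace.toDual ℝ E).symm.toContinuousLinearEquiv.toContinuousLinearMap
          (fderiv ℝ ψ x) :=
      ((InnerProductSpace.toDual ℝ
        E).symm.toContinuousLinearEquiv.toContinuousLinearMap.differentiable).comp hd
    exact this
  apply lipschitzWith_of_nnnorm_fderiv_le hdg
  intro x
  rw [← NNReal.coe_le_coe, coe_nnnorm, Real.coe_toNNReal']
  exact le_max_of_le_left (hhess x)

lemma aux_grad_lip (ψ : E → ℝ) (hψ : ContDiff ℝ 2 ψ) (K₂ : ℝ)
    (hhess : ∀ x, ‖fderiv ℝ (gradient ψ) x‖ ≤ K₂) :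
    ∀ a b : E, ‖gradient ψ a - gradient ψ b‖ ≤ K₂ * ‖a - b‖ := by
  have hd : Differentiable ℝ (fderiv ℝ ψ) :=
    (hψ.fderiv_right (m := 1) (by norm_num)).differentiable one_ne_zero
  have hdg : Differentiable ℝ (gradient ψ) := by
    have : Differentiable ℝ fun x =>
        (InnerProductSpace.toDual ℝ E).symm.toContinuousLinearEquiv.toContinuousLinearMap
          (fderiv ℝ ψ x) :=
      ((InnerProductSpace.toDual ℝ
        E).symm.toContinuousLinearEquiv.toContinuousLinearMap.differentiable).comp hd
    exact this
  have hlip : LipschitzWith K₂.toNNReal (gradient ψ) := by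
    apply lipschitzWith_of_nnnorm_fderiv_le hdg
    intro x
    rw [← NNReal.coe_le_coe, coe_nnnorm, Real.coe_toNNReal']
    exact le_max_of_le_left (hhess x)
  intro a b
  have hK₂0 : 0 ≤ K₂ := le_trans (norm_nonneg _) (hhess 0)
  have h := hlip.dist_le_mul a b
  rw [dist_eq_norm, dist_eq_norm, Real.coe_toNNReal K₂ hK₂0] at h
  exact h

lemma aux_grad_cont (ψ : E → ℝ) (hψ : ContDiff ℝ 2 ψ) : Continuous (gradient ψ) := by
  have hd : Continuous (fderiv ℝ ψ) :=
    ((hψ.fderiv_right (m := 1) (by norm_num)).differentiable one_ne_zero).continuous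
  exact (InnerProductSpace.toDual ℝ
    E).symm.toContinuousLinearEquiv.toContinuousLinearMap.continuous.comp hd

end gradaux

section flow

variable {E : Type*} [NormedAddCommGroup E] [NormedSpace ℝ E]

lemma aux_flow_curve_cont {g : E → E} {U : ℝ → E → E}
    (hUflow : ∀ (x : E) (t : ℝ), HasDerivAt (fun s => U s x) (g (U t x)) t) (x : E) :
    Continuous (fun s => U s x) :=
  continuous_iff_continuousAt.2 fun s => (hUflow x s).continuousAt

lemma aux_flow_curve_neg {g : E → E} {U : ℝ → E → E}
    (hUflow : ∀ (x : E) (t : ℝ), HasDerivAt (fun s => U s x) (g (U t x)) t) (x : E) (s : ℝ) :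
    HasDerivAt (fun s => U (-s) x) (-(g (U (-s) x))) s := by
  have h := (hUflow x (-s)).scomp s (hasDerivAt_neg s)
  simpa [Function.comp_def] using h

omit [NormedSpace ℝ E] in
lemma aux_lip_neg {g : E → E} {K : NNReal} (hglip : LipschitzWith K g) :
    LipschitzWith K (fun z => -(g z)) := by
  apply LipschitzWith.of_dist_le_mul
  intro x y
  rw [dist_neg_neg]
  exact hglip.dist_le_mul x y

lemma aux_flow_dist {g : E → E} {K₂ : ℝ} (hK₂0 : 0 ≤ K₂)
    (hglip : LipschitzWith K₂.toNNReal g) {U : ℝ → E → E} (hU0 : ∀ x, U 0 x = x)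
    (hUflow : ∀ (x : E) (t : ℝ), HasDerivAt (fun s => U s x) (g (U t x)) t)
    (t : ℝ) (x y : E) :
    dist (U t x) (U t y) ≤ dist x y * Real.exp (K₂ * |t|) := by
  rcases le_total 0 t with ht | ht
  · have := dist_le_of_trajectories_ODE (v := fun _ z => g z) (K := K₂.toNNReal)
      (fun _ => hglip)
      ((aux_flow_curve_cont hUflow x).continuousOn (s := Set.Icc 0 t))
      (fun s _ => (hUflow x s).hasDerivWithinAt)
      ((aux_flow_curve_cont hUflow y).continuousOn (s := Set.Icc 0 t))
      (fun s _ => (hUflow y s).hasDerivWithinAt)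
      (congrArg₂ dist (hU0 x) (hU0 y)).le t (Set.mem_Icc.2 ⟨ht, le_refl t⟩)
    rw [abs_of_nonneg ht]
    rwa [sub_zero, Real.coe_toNNReal K₂ hK₂0] at this
  · have ha : dist (U (-(0:ℝ)) x) (U (-(0:ℝ)) y) = dist x y := by norm_num [hU0]
    have := dist_le_of_trajectories_ODE (v := fun _ z => -(g z)) (K := K₂.toNNReal)
      (fun _ => aux_lip_neg hglip)
      (((aux_flow_curve_cont hUflow x).comp continuous_neg).continuousOn (s := Set.Icc 0 (-t)))
      (fun s _ => (aux_flow_curve_neg hUflow x s).hasDerivWithinAt)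
      (((aux_flow_curve_cont hUflow y).comp continuous_neg).continuousOn (s := Set.Icc 0 (-t)))
      (fun s _ => (aux_flow_curve_neg hUflow y s).hasDerivWithinAt)
      ha.le (-t) (Set.mem_Icc.2 ⟨neg_nonneg.2 ht, le_refl _⟩)
    rw [abs_of_nonpos ht]
    rw [sub_zero, Real.coe_toNNReal K₂ hK₂0] at this
    simpa using this

lemma aux_flow_cont {g : E → E} {K₂ : ℝ} (hK₂0 : 0 ≤ K₂)
    (hglip : LipschitzWith K₂.toNNReal g) {U : ℝ → E → E} (hU0 : ∀ x, U 0 x = x)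
    (hUflow : ∀ (x : E) (t : ℝ), HasDerivAt (fun s => U s x) (g (U t x)) t)
    (t : ℝ) : Continuous (U t) := by
  have : LipschitzWith (Real.exp (K₂ * |t|)).toNNReal (U t) := by
    apply LipschitzWith.of_dist_le_mul
    intro x y
    rw [Real.coe_toNNReal _ (Real.exp_nonneg _), mul_comm]
    exact aux_flow_dist hK₂0 hglip hU0 hUflow t x y
  exact this.continuous

lemma aux_flow_norm {g : E → E} {K₁ : ℝ} (hgrad : ∀ x, ‖g x‖ ≤ K₁)
    {U : ℝ → E → E} (hU0 : ∀ x, U 0 x = x)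
    (hUflow : ∀ (x : E) (t : ℝ), HasDerivAt (fun s => U s x) (g (U t x)) t)
    (t : ℝ) (x : E) :
    ‖U t x - x‖ ≤ K₁ * |t| := by
  rcases le_total 0 t with ht | ht
  · have := norm_image_sub_le_of_norm_deriv_le_segment'
      (f := fun s => U s x) (f' := fun s => g (U s x)) (a := 0) (b := t)
      (fun s _ => (hUflow x s).hasDerivWithinAt) (fun s _ => hgrad _)
      t (Set.mem_Icc.2 ⟨ht, le_refl t⟩)
    rw [abs_of_nonneg ht]
    simpa [hU0] using this
  · have := norm_image_sub_le_of_norm_deriv_le_segment'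
      (f := fun s => U s x) (f' := fun s => g (U s x)) (a := t) (b := 0)
      (fun s _ => (hUflow x s).hasDerivWithinAt) (fun s _ => hgrad _)
      0 (Set.mem_Icc.2 ⟨ht, le_refl (0:ℝ)⟩)
    rw [abs_of_nonpos ht, ← norm_neg]
    simpa [hU0, neg_sub, zero_sub] using this

lemma aux_flow_inv {g : E → E} {K₂ : ℝ}
    (hglip : LipschitzWith K₂.toNNReal g) {U : ℝ → E → E} (hU0 : ∀ x, U 0 x = x)
    (hUflow : ∀ (x : E) (t : ℝ), HasDerivAt (fun s => U s x) (g (U t x)) t)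
    (t : ℝ) (ht : 0 ≤ t) (x : E) : U (-t) (U t x) = x := by
  have key : Set.EqOn (fun s => U (t - s) x) (fun s => U (-s) (U t x)) (Set.Icc 0 t) := by
    apply ODE_solution_unique (v := fun _ z => -(g z)) (K := K₂.toNNReal)
      (fun _ => aux_lip_neg hglip)
    · exact ((aux_flow_curve_cont hUflow x).comp
        (continuous_const.sub continuous_id)).continuousOn
    · intro s _
      have h := (hUflow x (t - s)).scomp s ((hasDerivAt_id s).const_sub t)
      simpa [Function.comp_def] using h.hasDerivWithinAt
    · exact ((aux_flow_curve_cont hUflow (U t x)).comp continuous_neg).continuousOn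
    · exact fun s _ => (aux_flow_curve_neg hUflow (U t x) s).hasDerivWithinAt
    · simp [hU0]
  have := key (Set.mem_Icc.2 ⟨ht, le_refl t⟩)
  simpa [hU0] using this.symm

lemma aux_flow_taylor {g : E → E} {K₁ K₂ : ℝ} (hK₂0 : 0 ≤ K₂)
    (hglip : LipschitzWith K₂.toNNReal g) (hgrad : ∀ x, ‖g x‖ ≤ K₁)
    {U : ℝ → E → E} (hU0 : ∀ x, U 0 x = x)
    (hUflow : ∀ (x : E) (t : ℝ), HasDerivAt (fun s => U s x) (g (U t x)) t)
    (y : E) (t : ℝ) (ht : t ∈ Set.Icc (0:ℝ) 1) :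
    ‖U t y - y - t • g y‖ ≤ K₁ * K₂ * t ^ 2 := by
  have hK₁0 : 0 ≤ K₁ := le_trans (norm_nonneg _) (hgrad (U 0 y))
  have hd : ∀ s : ℝ, HasDerivAt (fun s => U s y - s • g y) (g (U s y) - g y) s := by
    intro s
    have h1 := hUflow y s
    have h2 : HasDerivAt (fun s : ℝ => s • g y) ((1:ℝ) • g y) s :=
      (hasDerivAt_id s).smul_const (g y)
    simpa [Pi.sub_def] using h1.sub h2
  have := norm_image_sub_le_of_norm_deriv_le_segment'
    (f := fun s => U s y - s • g y) (f' := fun s => g (U s y) - g y) (a := 0) (b := t)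
    (C := K₁ * K₂ * t)
    (fun s _ => (hd s).hasDerivWithinAt)
    (fun s hs => by
      have hlip2 : ‖g (U s y) - g y‖ ≤ K₂ * ‖U s y - y‖ := by
        have := hglip.dist_le_mul (U s y) y
        rwa [dist_eq_norm, dist_eq_norm, Real.coe_toNNReal K₂ hK₂0] at this
      refine le_trans hlip2 ?_
      have hn : ‖U s y - y‖ ≤ K₁ * s := by
        have := aux_flow_norm hgrad hU0 hUflow s y
        rwa [abs_of_nonneg hs.1] at this
      calc K₂ * ‖U s y - y‖ ≤ K₂ * (K₁ * s) := mul_le_mul_of_nonneg_left hn hK₂0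
        _ ≤ K₂ * (K₁ * t) := mul_le_mul_of_nonneg_left
              (mul_le_mul_of_nonneg_left (le_of_lt hs.2) hK₁0) hK₂0
        _ = K₁ * K₂ * t := by ring)
    t (Set.mem_Icc.2 ⟨ht.1, le_refl t⟩)
  simp only [hU0, zero_smul, sub_zero] at this
  calc ‖U t y - y - t • g y‖ = ‖U t y - t • g y - y‖ := by rw [sub_right_comm]
    _ ≤ K₁ * K₂ * t * t := this
    _ = K₁ * K₂ * t ^ 2 := by ring

end flow


section auxlemmas

lemma aux_int {α : Type*} [MeasurableSpace α] (ν : Measure α) [IsFiniteMeasure ν]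
    (f : α → ℝ) (C : ℝ) (hm : AEStronglyMeasurable f ν) (hb : ∀ᵐ x ∂ν, |f x| ≤ C) :
    Integrable f ν :=
  Integrable.mono' (integrable_const C) hm (by simpa [Real.norm_eq_abs] using hb)

lemma aux_push {X : Type*} [MeasurableSpace X] [PseudoMetricSpace X] [OpensMeasurableSpace X]
    [SecondCountableTopology X]
    (π : Measure (X × X)) (h : X → X) (hm : Measurable h) :
    (π.map (fun p => (p.1, h p.2))).map Prod.fst = π.map Prod.fst ∧
    (π.map (fun p => (p.1, h p.2))).map Prod.snd = (π.map Prod.snd).map h ∧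
    (∫ p, dist p.1 p.2 ^ 2 ∂(π.map (fun p => (p.1, h p.2))))
      = ∫ p, dist p.1 (h p.2) ^ 2 ∂π := by
  have hfm : Measurable fun p : X × X => (p.1, h p.2) :=
    measurable_fst.prodMk (hm.comp measurable_snd)
  refine ⟨?_, ?_, ?_⟩
  · rw [Measure.map_map measurable_fst hfm]; rfl
  · rw [Measure.map_map measurable_snd hfm, Measure.map_map hm measurable_snd]; rfl
  · rw [integral_map (f := fun p : X × X => dist p.1 p.2 ^ 2) hfm.aemeasurable
      ((continuous_fst.dist continuous_snd).pow 2).aestronglyMeasurable]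

end auxlemmas

set_option maxHeartbeats 2000000 in
/-- Upper derivative bound (4.6) of the paper in Euclidean form: if `γ` is an optimal
coupling of compactly supported probability measures `σ, μ` and `μ_t = (U_t)_#μ` with
`U_t` the flow of `∇ψ`, then
`limsup_{t→0⁺} (W₂²(σ,μ_t) − W₂²(σ,μ))/t ≤ 2∫⟨∇ψ(y), y − x⟩ dγ(x,y)`. -/
theorem stmt16 {m : ℕ} (σ μ : Measure (EuclideanSpace ℝ (Fin m)))
    [IsProbabilityMeasure σ] [IsProbabilityMeasure μ]
    (hσc : ∃ K : Set (EuclideanSpace ℝ (Fin m)), IsCompact K ∧ σ Kᶜ = 0)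
    (hμc : ∃ K : Set (EuclideanSpace ℝ (Fin m)), IsCompact K ∧ μ Kᶜ = 0)
    (γ : Measure (EuclideanSpace ℝ (Fin m) × EuclideanSpace ℝ (Fin m)))
    (hγ₁ : γ.map Prod.fst = σ) (hγ₂ : γ.map Prod.snd = μ)
    (hopt : ∫ p, dist p.1 p.2 ^ 2 ∂γ = W2sq σ μ)
    (ψ : EuclideanSpace ℝ (Fin m) → ℝ) (hψ : ContDiff ℝ 2 ψ)
    (K₁ K₂ : ℝ) (hgrad : ∀ x, ‖gradient ψ x‖ ≤ K₁)
    (hhess : ∀ x, ‖fderiv ℝ (gradient ψ) x‖ ≤ K₂)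
    (U : ℝ → EuclideanSpace ℝ (Fin m) → EuclideanSpace ℝ (Fin m))
    (hU0 : ∀ x, U 0 x = x)
    (hUflow : ∀ x t, HasDerivAt (fun s => U s x) (gradient ψ (U t x)) t) :
    limsup (fun t => (W2sq σ (μ.map (U t)) - W2sq σ μ) / t) (nhdsWithin 0 (Set.Ioi 0))
      ≤ 2 * ∫ p, ⟪gradient ψ p.2, p.2 - p.1⟫ ∂γ := by
  classical
  obtain ⟨Kσ, hKσc, hKσ0⟩ := hσc
  obtain ⟨Kμ, hKμc, hKμ0⟩ := hμc
  have hK₁0 : 0 ≤ K₁ := le_trans (norm_nonneg _) (hgrad 0)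
  have hK₂0 : 0 ≤ K₂ := le_trans (norm_nonneg _) (hhess 0)
  have hglipW : LipschitzWith K₂.toNNReal (gradient ψ) := aux_grad_lipW ψ hψ K₂ hhess
  have hgc : Continuous (gradient ψ) := aux_grad_cont ψ hψ
  have hUcont : ∀ t, Continuous (U t) := fun t => aux_flow_cont hK₂0 hglipW hU0 hUflow t
  have hUmeas : ∀ t, Measurable (U t) := fun t => (hUcont t).measurable
  have hUnorm : ∀ (t : ℝ) (x : EuclideanSpace ℝ (Fin m)), ‖U t x - x‖ ≤ K₁ * |t| :=
    fun t x => aux_flow_norm hgrad hU0 hUflow t x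
  have hUinv : ∀ t : ℝ, 0 ≤ t → ∀ x, U (-t) (U t x) = x :=
    fun t ht x => aux_flow_inv hglipW hU0 hUflow t ht x
  obtain ⟨R₁, hR₁pos, hR₁⟩ := hKσc.isBounded.subset_closedBall_lt 0 0
  obtain ⟨R₂, hR₂pos, hR₂⟩ := hKμc.isBounded.subset_closedBall_lt 0 0
  set R₀ : ℝ := R₁ + R₂ with hR₀def
  set R : ℝ := R₀ + K₁ with hRdef
  set A : ℝ := ∫ p, ⟪gradient ψ p.2, p.2 - p.1⟫ ∂γ with hA
  set W : ℝ := W2sq σ μ with hW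
  set Sc : Measure (EuclideanSpace ℝ (Fin m)) → Set ℝ := fun ν =>
    {r : ℝ | ∃ π : Measure (EuclideanSpace ℝ (Fin m) × EuclideanSpace ℝ (Fin m)),
      π.map Prod.fst = σ ∧ π.map Prod.snd = ν ∧ r = ∫ p, dist p.1 p.2 ^ 2 ∂π} with hSc
  have hWs : ∀ ν, W2sq σ ν = sInf (Sc ν) := fun ν => rfl
  have hbdd : ∀ ν, BddBelow (Sc ν) := by
    intro ν
    refine ⟨0, ?_⟩
    rintro r ⟨π, -, -, rfl⟩
    exact integral_nonneg fun p => pow_nonneg dist_nonneg 2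
  -- γ is a probability measure
  have hγuniv : γ Set.univ = 1 := by
    have h := congrArg (fun ν : Measure (EuclideanSpace ℝ (Fin m)) => ν Set.univ) hγ₁
    simp only [Measure.map_apply measurable_fst MeasurableSet.univ, Set.preimage_univ] at h
    rw [h]
    exact measure_univ
  haveI hγprob : IsProbabilityMeasure γ := ⟨hγuniv⟩
  have hKσm : MeasurableSet Kσ := hKσc.isClosed.measurableSet
  have hKμm : MeasurableSet Kμ := hKμc.isClosed.measurableSet
  -- a.e. support bounds for γ
  have haeγ : ∀ᵐ p ∂γ, ‖p.1‖ ≤ R₁ ∧ ‖p.2‖ ≤ R₂ := by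
    have h1 : ∀ᵐ p ∂γ, p.1 ∈ Kσ := by
      rw [ae_iff]
      have : {p : EuclideanSpace ℝ (Fin m) × EuclideanSpace ℝ (Fin m) | ¬ p.1 ∈ Kσ}
          = Prod.fst ⁻¹' Kσᶜ := rfl
      rw [this, ← Measure.map_apply measurable_fst hKσm.compl, hγ₁]
      exact hKσ0
    have h2 : ∀ᵐ p ∂γ, p.2 ∈ Kμ := by
      rw [ae_iff]
      have : {p : EuclideanSpace ℝ (Fin m) × EuclideanSpace ℝ (Fin m) | ¬ p.2 ∈ Kμ}
          = Prod.snd ⁻¹' Kμᶜ := rfl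
      rw [this, ← Measure.map_apply measurable_snd hKμm.compl, hγ₂]
      exact hKμ0
    filter_upwards [h1, h2] with p hp1 hp2
    exact ⟨mem_closedBall_zero_iff.1 (hR₁ hp1), mem_closedBall_zero_iff.1 (hR₂ hp2)⟩
  -- integrability of the basic integrands w.r.t. γ
  have idist : Integrable (fun p : EuclideanSpace ℝ (Fin m) × EuclideanSpace ℝ (Fin m) =>
      dist p.1 p.2 ^ 2) γ := by
    refine aux_int γ _ (R₀ ^ 2) ((continuous_fst.dist continuous_snd).pow 2).aestronglyMeasurable
      (haeγ.mono fun p hp => ?_)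
    rw [abs_of_nonneg (pow_nonneg dist_nonneg 2)]
    have hd : dist p.1 p.2 ≤ R₀ := by
      rw [dist_eq_norm]
      exact (norm_sub_le _ _).trans (by rw [hR₀def]; linarith [hp.1, hp.2])
    exact pow_le_pow_left₀ dist_nonneg hd 2
  have iinner : Integrable (fun p : EuclideanSpace ℝ (Fin m) × EuclideanSpace ℝ (Fin m) =>
      ⟪gradient ψ p.2, p.2 - p.1⟫) γ := by
    refine aux_int γ _ (K₁ * R₀)
      (((hgc.comp continuous_snd).inner (continuous_snd.sub continuous_fst)).aestronglyMeasurable)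
      (haeγ.mono fun p hp => ?_)
    refine (abs_real_inner_le_norm _ _).trans ?_
    have h1 : ‖p.2 - p.1‖ ≤ R₀ := (norm_sub_le _ _).trans (by rw [hR₀def]; linarith [hp.1, hp.2])
    exact mul_le_mul (hgrad _) h1 (norm_nonneg _) hK₁0
  -- the pushforward coupling: membership
  have hmemt : ∀ t : ℝ,
      (∫ p, dist p.1 (U t p.2) ^ 2 ∂γ) ∈ Sc (μ.map (U t)) := by
    intro t
    obtain ⟨hm1, hm2, hi⟩ := aux_push γ (U t) (hUmeas t)
    rw [hγ₁] at hm1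
    rw [hγ₂] at hm2
    exact ⟨γ.map (fun p => (p.1, U t p.2)), hm1, hm2, hi.symm⟩
  -- upper bound
  have hup : ∀ t : ℝ, t ∈ Set.Ioc (0:ℝ) 1 →
      W2sq σ (μ.map (U t)) ≤ W + (2 * A) * t + (2*K₁*K₂*R₀ + K₁^2) * t^2 := by
    intro t ht
    have hle : W2sq σ (μ.map (U t)) ≤ ∫ p, dist p.1 (U t p.2) ^ 2 ∂γ := by
      rw [hWs]
      exact csInf_le (hbdd _) (hmemt t)
    refine hle.trans ?_
    have key : ∀ x y : EuclideanSpace ℝ (Fin m), ‖x‖ ≤ R₁ → ‖y‖ ≤ R₂ →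
        dist x (U t y) ^ 2
          ≤ dist x y ^ 2 + 2*t*⟪gradient ψ y, y - x⟫ + (2*K₁*K₂*R₀ + K₁^2) * t^2 := by
      intro x y hx hy
      set v := gradient ψ y with hv
      set w := U t y - y with hwdef
      have hyx : ‖y - x‖ ≤ R₀ := (norm_sub_le _ _).trans (by rw [hR₀def]; linarith)
      have hwn : ‖w‖ ≤ K₁ * t := by
        have := hUnorm t y
        rwa [abs_of_nonneg ht.1.le] at this
      have htay : ‖w - t • v‖ ≤ K₁ * K₂ * t^2 :=
        aux_flow_taylor hK₂0 hglipW hgrad hU0 hUflow y t ⟨ht.1.le, ht.2⟩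
      have hsplit : dist x (U t y) ^ 2 = ‖y - x‖^2 + 2 * ⟪y - x, w⟫ + ‖w‖^2 := by
        rw [dist_eq_norm', show U t y - x = (y - x) + w by rw [hwdef]; abel, norm_add_sq_real]
      have hinner : ⟪y - x, w⟫ = ⟪w - t • v, y - x⟫ + t * ⟪v, y - x⟫ := by
        have h1 : ⟪w - t • v, y - x⟫ = ⟪w, y - x⟫ - t * ⟪v, y - x⟫ := by
          rw [inner_sub_left (𝕜 := ℝ) w (t • v) (y - x), real_inner_smul_left]
        have h2 : ⟪y - x, w⟫ = ⟪w, y - x⟫ := real_inner_comm _ _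
        linarith
      have e1 : ⟪w - t • v, y - x⟫ ≤ (K₁ * K₂ * t^2) * R₀ :=
        (real_inner_le_norm _ _).trans
          (mul_le_mul htay hyx (norm_nonneg _) (mul_nonneg (mul_nonneg hK₁0 hK₂0) (sq_nonneg t)))
      have e2 : ‖w‖^2 ≤ (K₁*t)^2 := pow_le_pow_left₀ (norm_nonneg _) hwn 2
      have e3 : dist x y = ‖y - x‖ := dist_eq_norm' x y
      rw [hsplit, e3, hinner]
      nlinarith [e1, e2]
    have haebound : ∀ᵐ p ∂γ, dist p.1 (U t p.2) ^ 2
        ≤ dist p.1 p.2 ^ 2 + 2*t*⟪gradient ψ p.2, p.2 - p.1⟫ + (2*K₁*K₂*R₀ + K₁^2) * t^2 :=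
      haeγ.mono fun p hp => key p.1 p.2 hp.1 hp.2
    have i3 : Integrable (fun p : EuclideanSpace ℝ (Fin m) × EuclideanSpace ℝ (Fin m) =>
        dist p.1 (U t p.2) ^ 2) γ := by
      refine aux_int γ _ ((R₀ + K₁) ^ 2)
        ((continuous_fst.dist ((hUcont t).comp continuous_snd)).pow 2).aestronglyMeasurable
        (haeγ.mono fun p hp => ?_)
      rw [abs_of_nonneg (pow_nonneg dist_nonneg 2)]
      have hd : dist p.1 (U t p.2) ≤ R₀ + K₁ := by
        have h1 : dist p.1 (U t p.2) ≤ dist p.1 p.2 + dist p.2 (U t p.2) := dist_triangle _ _ _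
        have h2 : dist p.2 (U t p.2) ≤ K₁ * t := by
          rw [dist_comm, dist_eq_norm]
          have := hUnorm t p.2
          rwa [abs_of_nonneg ht.1.le] at this
        have h3 : dist p.1 p.2 ≤ R₀ := by
          rw [dist_eq_norm]
          exact (norm_sub_le _ _).trans (by rw [hR₀def]; linarith [hp.1, hp.2])
        have h4 : K₁ * t ≤ K₁ := mul_le_of_le_one_right hK₁0 ht.2
        linarith
      exact pow_le_pow_left₀ dist_nonneg hd 2
    have irhs1 : Integrable (fun p : EuclideanSpace ℝ (Fin m) × EuclideanSpace ℝ (Fin m) =>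
        2*t*⟪gradient ψ p.2, p.2 - p.1⟫) γ := iinner.const_mul _
    have i12 : Integrable (fun p : EuclideanSpace ℝ (Fin m) × EuclideanSpace ℝ (Fin m) =>
        dist p.1 p.2 ^ 2 + 2*t*⟪gradient ψ p.2, p.2 - p.1⟫) γ := idist.add irhs1
    calc (∫ p, dist p.1 (U t p.2) ^ 2 ∂γ)
        ≤ ∫ p, (dist p.1 p.2 ^ 2 + 2*t*⟪gradient ψ p.2, p.2 - p.1⟫
            + (2*K₁*K₂*R₀ + K₁^2) * t^2) ∂γ :=
          integral_mono_ae i3 (i12.add (integrable_const _)) haebound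
      _ = W + (2 * A) * t + (2*K₁*K₂*R₀ + K₁^2) * t^2 := by
          rw [integral_add i12 (integrable_const ((2*K₁*K₂*R₀ + K₁^2) * t^2))]
          rw [integral_add idist irhs1]
          rw [integral_const]
          rw [integral_const_mul]
          simp only [probReal_univ, smul_eq_mul, one_mul]
          rw [hopt, ← hA]
          ring
  -- lower bound
  have hlow : ∀ t : ℝ, t ∈ Set.Ioc (0:ℝ) 1 →
      W - (2*K₁*R + K₁^2) * t ≤ W2sq σ (μ.map (U t)) := by
    intro t ht
    rw [hWs]
    apply le_csInf ⟨_, hmemt t⟩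
    rintro r ⟨π, hπ1, hπ2, rfl⟩
    haveI : IsProbabilityMeasure π := by
      constructor
      have h := congrArg (fun ν : Measure (EuclideanSpace ℝ (Fin m)) => ν Set.univ) hπ1
      simp only [Measure.map_apply measurable_fst MeasurableSet.univ, Set.preimage_univ] at h
      rw [h]
      exact measure_univ
    -- a.e. bounds for π
    have hae1 : ∀ᵐ p ∂π, ‖p.1‖ ≤ R₁ := by
      have h1 : ∀ᵐ p ∂π, p.1 ∈ Kσ := by
        rw [ae_iff]
        have : {p : EuclideanSpace ℝ (Fin m) × EuclideanSpace ℝ (Fin m) | ¬ p.1 ∈ Kσ}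
            = Prod.fst ⁻¹' Kσᶜ := rfl
        rw [this, ← Measure.map_apply measurable_fst hKσm.compl, hπ1]
        exact hKσ0
      exact h1.mono fun p hp => mem_closedBall_zero_iff.1 (hR₁ hp)
    have hae2 : ∀ᵐ p ∂π, ‖p.2‖ ≤ R₂ + K₁ := by
      have hK'm : MeasurableSet (Metric.closedBall (0 : EuclideanSpace ℝ (Fin m)) (R₂ + K₁)) :=
        Metric.isClosed_closedBall.measurableSet
      have hsub : Kμ ⊆ U t ⁻¹' (Metric.closedBall 0 (R₂ + K₁)) := by
        intro x hx
        have h1 : ‖U t x - x‖ ≤ K₁ := by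
          have hb : K₁ * |t| ≤ K₁ := by
            rw [abs_of_nonneg ht.1.le]
            exact mul_le_of_le_one_right hK₁0 ht.2
          exact (hUnorm t x).trans hb
        have h2 : ‖x‖ ≤ R₂ := mem_closedBall_zero_iff.1 (hR₂ hx)
        have h3 : ‖U t x‖ ≤ ‖U t x - x‖ + ‖x‖ := by
          simpa using norm_add_le (U t x - x) x
        exact mem_closedBall_zero_iff.2 (by linarith)
      have h1 : ∀ᵐ p ∂π, p.2 ∈ Metric.closedBall (0 : EuclideanSpace ℝ (Fin m)) (R₂ + K₁) := by
        rw [ae_iff]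
        have he : {p : EuclideanSpace ℝ (Fin m) × EuclideanSpace ℝ (Fin m) |
            ¬ p.2 ∈ Metric.closedBall (0 : EuclideanSpace ℝ (Fin m)) (R₂ + K₁)}
            = Prod.snd ⁻¹' (Metric.closedBall (0 : EuclideanSpace ℝ (Fin m)) (R₂ + K₁))ᶜ := rfl
        rw [he, ← Measure.map_apply measurable_snd hK'm.compl, hπ2,
          Measure.map_apply (hUmeas t) hK'm.compl]
        refine measure_mono_null ?_ hKμ0
        intro x hx
        exact fun hxK => hx (hsub hxK)
      exact h1.mono fun p hp => mem_closedBall_zero_iff.1 hp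
    -- pushforward by the reverse flow
    obtain ⟨hm1, hm2, hi⟩ := aux_push π (U (-t)) (hUmeas (-t))
    rw [hπ1] at hm1
    have hm2' : (π.map (fun p => (p.1, U (-t) p.2))).map Prod.snd = μ := by
      rw [hm2, hπ2, Measure.map_map (hUmeas (-t)) (hUmeas t)]
      have : (U (-t)) ∘ (U t) = id := funext fun x => hUinv t ht.1.le x
      rw [this, Measure.map_id]
    have hWle : W ≤ ∫ p, dist p.1 (U (-t) p.2) ^ 2 ∂π := by
      rw [hW, hWs]
      exact csInf_le (hbdd _) ⟨π.map (fun p => (p.1, U (-t) p.2)), hm1, hm2', hi.symm⟩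
    -- compare the two integrals
    have hptwise : ∀ᵐ p ∂π, dist p.1 (U (-t) p.2) ^ 2
        ≤ dist p.1 p.2 ^ 2 + (2*K₁*R + K₁^2) * t := by
      filter_upwards [hae1, hae2] with p hp1 hp2
      have hdz : dist p.2 (U (-t) p.2) ≤ K₁ * t := by
        rw [dist_comm, dist_eq_norm]
        have := hUnorm (-t) p.2
        rwa [abs_neg, abs_of_nonneg ht.1.le] at this
      have htri : dist p.1 (U (-t) p.2) ≤ dist p.1 p.2 + K₁ * t :=
        (dist_triangle _ _ _).trans (by linarith)
      have hsq : dist p.1 (U (-t) p.2) ^ 2 ≤ (dist p.1 p.2 + K₁ * t) ^ 2 :=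
        pow_le_pow_left₀ dist_nonneg htri 2
      have hdR : dist p.1 p.2 ≤ R := by
        rw [dist_eq_norm, hRdef, hR₀def]
        exact (norm_sub_le _ _).trans (by linarith)
      have ht2 : t^2 ≤ t := by nlinarith [ht.1.le, ht.2]
      have b1 : 2*K₁*t*dist p.1 p.2 ≤ 2*K₁*t*R :=
        mul_le_mul_of_nonneg_left hdR
          (mul_nonneg (mul_nonneg (by norm_num) hK₁0) ht.1.le)
      have b2 : K₁^2 * t^2 ≤ K₁^2 * t := mul_le_mul_of_nonneg_left ht2 (by positivity)
      nlinarith [hsq, b1, b2]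
    have idist' : Integrable (fun p : EuclideanSpace ℝ (Fin m) × EuclideanSpace ℝ (Fin m) =>
        dist p.1 p.2 ^ 2) π := by
      refine aux_int π _ ((R + K₁) ^ 2) ((continuous_fst.dist continuous_snd).pow 2).aestronglyMeasurable ?_
      filter_upwards [hae1, hae2] with p hp1 hp2
      rw [abs_of_nonneg (pow_nonneg dist_nonneg 2)]
      have hd : dist p.1 p.2 ≤ R + K₁ := by
        rw [dist_eq_norm, hRdef, hR₀def]
        exact (norm_sub_le _ _).trans (by linarith)
      exact pow_le_pow_left₀ dist_nonneg hd 2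
    have irev : Integrable (fun p : EuclideanSpace ℝ (Fin m) × EuclideanSpace ℝ (Fin m) =>
        dist p.1 (U (-t) p.2) ^ 2) π := by
      refine aux_int π _ ((R + 2*K₁) ^ 2)
        ((continuous_fst.dist ((hUcont (-t)).comp continuous_snd)).pow 2).aestronglyMeasurable ?_
      filter_upwards [hae1, hae2] with p hp1 hp2
      rw [abs_of_nonneg (pow_nonneg dist_nonneg 2)]
      have hdz : dist p.2 (U (-t) p.2) ≤ K₁ * t := by
        rw [dist_comm, dist_eq_norm]
        have := hUnorm (-t) p.2
        rwa [abs_neg, abs_of_nonneg ht.1.le] at this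
      have hd : dist p.1 (U (-t) p.2) ≤ R + 2*K₁ := by
        have h1 := dist_triangle p.1 p.2 (U (-t) p.2)
        have h3 : dist p.1 p.2 ≤ R + K₁ := by
          rw [dist_eq_norm, hRdef, hR₀def]
          exact (norm_sub_le _ _).trans (by linarith)
        have h4 : K₁ * t ≤ K₁ := mul_le_of_le_one_right hK₁0 ht.2
        linarith
      exact pow_le_pow_left₀ dist_nonneg hd 2
    have hcomp : (∫ p, dist p.1 (U (-t) p.2) ^ 2 ∂π)
        ≤ (∫ p, dist p.1 p.2 ^ 2 ∂π) + (2*K₁*R + K₁^2) * t := by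
      have hstep : (∫ p, dist p.1 (U (-t) p.2) ^ 2 ∂π)
          ≤ ∫ p, (dist p.1 p.2 ^ 2 + (2*K₁*R + K₁^2) * t) ∂π :=
        integral_mono_ae irev (idist'.add (integrable_const _)) hptwise
      rwa [integral_add idist' (integrable_const ((2*K₁*R + K₁^2) * t)), integral_const, probReal_univ,
        smul_eq_mul, one_mul] at hstep
    linarith [hWle, hcomp]
  -- conclusion via limsup comparison
  have hIoc : Set.Ioc (0:ℝ) 1 ∈ nhdsWithin 0 (Set.Ioi 0) :=
    Ioc_mem_nhdsGT_of_mem (Set.mem_Ico.2 ⟨le_refl 0, zero_lt_one⟩)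
  have hfle : ∀ᶠ t in nhdsWithin 0 (Set.Ioi 0),
      (W2sq σ (μ.map (U t)) - W) / t ≤ 2 * A + (2*K₁*K₂*R₀ + K₁^2) * t := by
    filter_upwards [hIoc] with t ht
    rw [div_le_iff₀ ht.1]
    have := hup t ht
    nlinarith [this, ht.1.le]
  have hflb : ∀ᶠ t in nhdsWithin 0 (Set.Ioi 0),
      -(2*K₁*R + K₁^2) ≤ (W2sq σ (μ.map (U t)) - W) / t := by
    filter_upwards [hIoc] with t ht
    rw [le_div_iff₀ ht.1]
    have := hlow t ht
    nlinarith [this]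
  have hgt : Tendsto (fun t : ℝ => 2 * A + (2*K₁*K₂*R₀ + K₁^2) * t)
      (nhdsWithin 0 (Set.Ioi 0)) (𝓝 (2 * A)) := by
    have hc : Continuous (fun t : ℝ => 2 * A + (2*K₁*K₂*R₀ + K₁^2) * t) :=
      continuous_const.add (continuous_const.mul continuous_id)
    have hmono : nhdsWithin (0:ℝ) (Set.Ioi 0) ≤ 𝓝 0 := nhdsWithin_le_nhds
    have := (hc.tendsto 0).mono_left hmono
    simpa using this
  calc limsup (fun t => (W2sq σ (μ.map (U t)) - W) / t) (nhdsWithin 0 (Set.Ioi 0))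
      ≤ limsup (fun t : ℝ => 2 * A + (2*K₁*K₂*R₀ + K₁^2) * t) (nhdsWithin 0 (Set.Ioi 0)) :=
        limsup_le_limsup hfle
          (isCoboundedUnder_le_of_eventually_le _ hflb)
          (hgt.isBoundedUnder_le)
    _ = 2 * A := hgt.limsup_eq
end

section
/- Let σ and μ be compactly supported Borel probability measures on ℝ^m and let γ be an optimal coupling of σ and μ, i.e. a coupling with ∫|x−y|² dγ(x,y) = W₂²(σ, μ). Let ψ : ℝ^m → ℝ be of class C² with bounded gradient and bounded Hessian, let (U_t) be the flow of ∇ψ, and set μ_t = (U_t)_#μ. Assume moreover that for each t ∈ (0,1] there exists an optimal coupling γ_t of σ and μ_t, and that the couplings η_t := ((x,y) ↦ (x, U_t^{-1}(y)))_# γ_t of σ and μ converge weakly to γ as t → 0⁺. Then the limit lim_{t→0⁺} (W₂²(σ, μ_t) − W₂²(σ, μ))/t exists and equals 2 ∫ ⟨∇ψ(y), y − x⟩ dγ(x, y). -/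
open MeasureTheory RealInnerProductSpace Filter

lemma W2sq_le_coupling {X : Type*} [MeasurableSpace X] [PseudoMetricSpace X]
    (μ ν : Measure X) (π : Measure (X × X)) (h1 : π.map Prod.fst = μ)
    (h2 : π.map Prod.snd = ν) : W2sq μ ν ≤ ∫ p, dist p.1 p.2 ^ 2 ∂π := by
  apply csInf_le
  · refine ⟨0, ?_⟩
    rintro r ⟨π', -, -, rfl⟩
    exact integral_nonneg fun p => pow_nonneg dist_nonneg 2
  · exact ⟨π, h1, h2, rfl⟩

set_option maxHeartbeats 2000000 in
/-- Theorem 4.2 of the paper in Euclidean form: if `γ` is an optimal coupling of the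
compactly supported probability measures `σ, μ`, `μ_t = (U_t)_#μ` with `U_t` the flow
of `∇ψ` (with inverse flow `V_t`), `γ_t` are optimal couplings of `σ` and `μ_t`, and
the couplings `η_t = ((x,y) ↦ (x, V_t(y)))_#γ_t` of `σ` and `μ` converge weakly to `γ`
as `t → 0⁺`, then `lim_{t→0⁺} (W₂²(σ,μ_t) − W₂²(σ,μ))/t = 2∫⟨∇ψ(y), y − x⟩ dγ(x,y)`. -/
theorem stmt17 {m : ℕ} (σ μ : Measure (EuclideanSpace ℝ (Fin m)))
    [IsProbabilityMeasure σ] [IsProbabilityMeasure μ]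
    (hσc : ∃ K : Set (EuclideanSpace ℝ (Fin m)), IsCompact K ∧ σ Kᶜ = 0)
    (hμc : ∃ K : Set (EuclideanSpace ℝ (Fin m)), IsCompact K ∧ μ Kᶜ = 0)
    (γ : Measure (EuclideanSpace ℝ (Fin m) × EuclideanSpace ℝ (Fin m)))
    (hγ₁ : γ.map Prod.fst = σ) (hγ₂ : γ.map Prod.snd = μ)
    (hopt : ∫ p, dist p.1 p.2 ^ 2 ∂γ = W2sq σ μ)
    (ψ : EuclideanSpace ℝ (Fin m) → ℝ) (hψ : ContDiff ℝ 2 ψ)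
    (K₁ K₂ : ℝ) (hgrad : ∀ x, ‖gradient ψ x‖ ≤ K₁)
    (hhess : ∀ x, ‖fderiv ℝ (gradient ψ) x‖ ≤ K₂)
    (U V : ℝ → EuclideanSpace ℝ (Fin m) → EuclideanSpace ℝ (Fin m))
    (hU0 : ∀ x, U 0 x = x)
    (hUflow : ∀ x t, HasDerivAt (fun s => U s x) (gradient ψ (U t x)) t)
    (hVmeas : ∀ t, Measurable (V t))
    (hVinv : ∀ t x, V t (U t x) = x ∧ U t (V t x) = x)
    (γt : ℝ → Measure (EuclideanSpace ℝ (Fin m) × EuclideanSpace ℝ (Fin m)))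
    (hγt₁ : ∀ t ∈ Set.Ioc (0:ℝ) 1, (γt t).map Prod.fst = σ)
    (hγt₂ : ∀ t ∈ Set.Ioc (0:ℝ) 1, (γt t).map Prod.snd = μ.map (U t))
    (hγtopt : ∀ t ∈ Set.Ioc (0:ℝ) 1,
      ∫ p, dist p.1 p.2 ^ 2 ∂(γt t) = W2sq σ (μ.map (U t)))
    (hweak : ∀ f : EuclideanSpace ℝ (Fin m) × EuclideanSpace ℝ (Fin m) → ℝ,
      Continuous f → (∃ Kb : ℝ, ∀ p, |f p| ≤ Kb) →
      Tendsto (fun t => ∫ p, f p ∂((γt t).map (fun q => (q.1, V t q.2))))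
        (nhdsWithin 0 (Set.Ioi 0)) (nhds (∫ p, f p ∂γ))) :
    Tendsto (fun t => (W2sq σ (μ.map (U t)) - W2sq σ μ) / t)
      (nhdsWithin 0 (Set.Ioi 0))
      (nhds (2 * ∫ p, ⟪gradient ψ p.2, p.2 - p.1⟫ ∂γ)) := by
  classical
  -- basic constants
  have hK₁0 : 0 ≤ K₁ := (norm_nonneg _).trans (hgrad 0)
  have hK₂0 : 0 ≤ K₂ := (norm_nonneg _).trans (hhess 0)
  -- gradient regularity
  have hfd : ContDiff ℝ 1 (fderiv ℝ ψ) := hψ.fderiv_right (by norm_num)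
  have hgradeq : gradient ψ = fun x =>
      (InnerProductSpace.toDual ℝ (EuclideanSpace ℝ (Fin m))).symm (fderiv ℝ ψ x) := rfl
  have hGcont' : Continuous (gradient ψ) := by
    rw [hgradeq]
    exact (InnerProductSpace.toDual ℝ (EuclideanSpace ℝ (Fin m))).symm.continuous.comp hfd.continuous
  have hgdiff : Differentiable ℝ (gradient ψ) := by
    rw [hgradeq]
    exact ((InnerProductSpace.toDual ℝ (EuclideanSpace ℝ (Fin m))).symm.toContinuousLinearEquiv.differentiable).comp
      (hfd.differentiable one_ne_zero)
  have hgradlip : ∀ a b : (EuclideanSpace ℝ (Fin m)), ‖gradient ψ a - gradient ψ b‖ ≤ K₂ * ‖a - b‖ := fun a b =>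
    Convex.norm_image_sub_le_of_norm_fderiv_le (fun x _ => hgdiff x)
      (fun x _ => hhess x) convex_univ (Set.mem_univ b) (Set.mem_univ a)
  -- measurability of U t
  have hUt_meas : ∀ t, Measurable (U t) := by
    intro t
    have hVinj : Function.Injective (V t) := by
      intro a b h
      have := congrArg (U t) h
      rwa [(hVinv t a).2, (hVinv t b).2] at this
    have hVemb : MeasurableEmbedding (V t) := (hVmeas t).measurableEmbedding hVinj
    intro s hs
    have himg : U t ⁻¹' s = V t '' s := by
      ext x
      simp only [Set.mem_preimage, Set.mem_image]
      constructor
      · intro h; exact ⟨U t x, h, (hVinv t x).1⟩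
      · rintro ⟨y, hy, rfl⟩; rwa [(hVinv t y).2]
    rw [himg]
    exact hVemb.measurableSet_image.2 hs
  -- flow estimates
  have hflow1 : ∀ (x : (EuclideanSpace ℝ (Fin m))) (t : ℝ), 0 ≤ t → ‖U t x - x‖ ≤ K₁ * t := by
    intro x t ht
    have h := Convex.norm_image_sub_le_of_norm_hasDerivWithin_le
      (f := fun s => U s x) (f' := fun s => gradient ψ (U s x)) (s := Set.Icc 0 t)
      (fun s _ => (hUflow x s).hasDerivWithinAt) (fun s _ => hgrad _)
      (convex_Icc 0 t) (Set.left_mem_Icc.2 ht) (Set.right_mem_Icc.2 ht)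
    simpa [hU0 x, Real.norm_eq_abs, abs_of_nonneg ht] using h
  have hflow2 : ∀ (x : (EuclideanSpace ℝ (Fin m))) (t : ℝ), 0 ≤ t →
      ‖U t x - x - t • gradient ψ x‖ ≤ K₂ * K₁ * t ^ 2 := by
    intro x t ht
    have hder : ∀ s ∈ Set.Icc 0 t, HasDerivWithinAt
        (fun s => U s x - s • gradient ψ x)
        (gradient ψ (U s x) - gradient ψ x) (Set.Icc 0 t) s := by
      intro s _
      have h1 : HasDerivAt (fun s : ℝ => s • gradient ψ x) (gradient ψ x) s := by
        simpa using (hasDerivAt_id s).smul_const (gradient ψ x)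
      exact ((hUflow x s).sub h1).hasDerivWithinAt
    have hbd : ∀ s ∈ Set.Icc 0 t,
        ‖gradient ψ (U s x) - gradient ψ x‖ ≤ K₂ * (K₁ * t) := by
      intro s hs
      refine (hgradlip (U s x) x).trans ?_
      have h1 : ‖U s x - x‖ ≤ K₁ * s := hflow1 x s hs.1
      have h2 : K₁ * s ≤ K₁ * t := by nlinarith [hs.2]
      nlinarith
    have h := Convex.norm_image_sub_le_of_norm_hasDerivWithin_le hder hbd
      (convex_Icc 0 t) (Set.left_mem_Icc.2 ht) (Set.right_mem_Icc.2 ht)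
    have h' : ‖U t x - t • gradient ψ x - x‖ ≤ K₂ * (K₁ * t) * t := by
      simpa [hU0 x, Real.norm_eq_abs, abs_of_nonneg ht] using h
    calc ‖U t x - x - t • gradient ψ x‖ = ‖U t x - t • gradient ψ x - x‖ := by
          congr 1; abel
      _ ≤ K₂ * (K₁ * t) * t := h'
      _ = K₂ * K₁ * t ^ 2 := by ring
  -- radius of support
  obtain ⟨Kσ, hKσc, hKσ0⟩ := hσc
  obtain ⟨Kμ, hKμc, hKμ0⟩ := hμc
  obtain ⟨Rσ, hRσ⟩ := hKσc.isBounded.subset_closedBall 0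
  obtain ⟨Rμ, hRμ⟩ := hKμc.isBounded.subset_closedBall 0
  set R : ℝ := max (max Rσ Rμ) 0 with hRdef
  have hR0 : 0 ≤ R := le_max_right _ _
  have hσB : σ (Metric.closedBall (0:(EuclideanSpace ℝ (Fin m))) R)ᶜ = 0 := by
    refine measure_mono_null (Set.compl_subset_compl.2 ?_) hKσ0
    exact hRσ.trans (Metric.closedBall_subset_closedBall
      ((le_max_left _ _).trans (le_max_left _ _)))
  have hμB : μ (Metric.closedBall (0:(EuclideanSpace ℝ (Fin m))) R)ᶜ = 0 := by
    refine measure_mono_null (Set.compl_subset_compl.2 ?_) hKμ0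
    exact hRμ.trans (Metric.closedBall_subset_closedBall
      ((le_max_right _ _).trans (le_max_left _ _)))
  -- a.e. support bound for couplings of σ and μ
  have haein : ∀ π : Measure ((EuclideanSpace ℝ (Fin m)) × (EuclideanSpace ℝ (Fin m))), π.map Prod.fst = σ → π.map Prod.snd = μ →
      ∀ᵐ p ∂π, ‖p.1‖ ≤ R ∧ ‖p.2‖ ≤ R := by
    intro π h1 h2
    have hBm : MeasurableSet (Metric.closedBall (0:(EuclideanSpace ℝ (Fin m))) R)ᶜ :=
      Metric.isClosed_closedBall.measurableSet.compl
    have hm1 : π {p : (EuclideanSpace ℝ (Fin m)) × (EuclideanSpace ℝ (Fin m)) | ¬ ‖p.1‖ ≤ R} = 0 := by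
      have : π (Prod.fst ⁻¹' (Metric.closedBall (0:(EuclideanSpace ℝ (Fin m))) R)ᶜ) = 0 := by
        rw [← Measure.map_apply measurable_fst hBm, h1]; exact hσB
      convert this using 2
      ext p
      simp [mem_closedBall_zero_iff]
    have hm2 : π {p : (EuclideanSpace ℝ (Fin m)) × (EuclideanSpace ℝ (Fin m)) | ¬ ‖p.2‖ ≤ R} = 0 := by
      have : π (Prod.snd ⁻¹' (Metric.closedBall (0:(EuclideanSpace ℝ (Fin m))) R)ᶜ) = 0 := by
        rw [← Measure.map_apply measurable_snd hBm, h2]; exact hμB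
      convert this using 2
      ext p
      simp [mem_closedBall_zero_iff]
    have e1 : ∀ᵐ p ∂π, ‖p.1‖ ≤ R := by
      rw [ae_iff]; exact hm1
    have e2 : ∀ᵐ p ∂π, ‖p.2‖ ≤ R := by
      rw [ae_iff]; exact hm2
    exact e1.and e2
  -- the couplings η t
  set T : ℝ → (EuclideanSpace ℝ (Fin m)) × (EuclideanSpace ℝ (Fin m)) → (EuclideanSpace ℝ (Fin m)) × (EuclideanSpace ℝ (Fin m)) := fun t q => (q.1, V t q.2) with hTdef
  have hTmeas : ∀ t, Measurable (T t) := fun t =>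
    measurable_fst.prodMk ((hVmeas t).comp measurable_snd)
  set ηt : ℝ → Measure ((EuclideanSpace ℝ (Fin m)) × (EuclideanSpace ℝ (Fin m))) := fun t => (γt t).map (T t) with hηtdef
  have hη1 : ∀ t ∈ Set.Ioc (0:ℝ) 1, (ηt t).map Prod.fst = σ := by
    intro t ht
    rw [hηtdef]
    rw [Measure.map_map measurable_fst (hTmeas t)]
    have : (Prod.fst ∘ T t) = (Prod.fst : (EuclideanSpace ℝ (Fin m)) × (EuclideanSpace ℝ (Fin m)) → (EuclideanSpace ℝ (Fin m))) := rfl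
    rw [this, hγt₁ t ht]
  have hη2 : ∀ t ∈ Set.Ioc (0:ℝ) 1, (ηt t).map Prod.snd = μ := by
    intro t ht
    rw [hηtdef]
    rw [Measure.map_map measurable_snd (hTmeas t)]
    have h1 : (Prod.snd ∘ T t) = (V t) ∘ (Prod.snd : (EuclideanSpace ℝ (Fin m)) × (EuclideanSpace ℝ (Fin m)) → (EuclideanSpace ℝ (Fin m))) := rfl
    rw [h1, ← Measure.map_map (hVmeas t) measurable_snd, hγt₂ t ht,
      Measure.map_map (hVmeas t) (hUt_meas t)]
    have h2 : (V t ∘ U t) = id := funext fun x => (hVinv t x).1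
    rw [h2, Measure.map_id]
  -- probability instances
  have hγtprob : ∀ t ∈ Set.Ioc (0:ℝ) 1, IsProbabilityMeasure (γt t) := by
    intro t ht
    constructor
    have h := congrArg (fun ν : Measure (EuclideanSpace ℝ (Fin m)) => ν Set.univ) (hγt₁ t ht)
    simp only [Measure.map_apply measurable_fst MeasurableSet.univ, Set.preimage_univ] at h
    rw [h]; exact measure_univ
  have hηprob : ∀ t ∈ Set.Ioc (0:ℝ) 1, IsProbabilityMeasure (ηt t) := by
    intro t ht
    constructor
    have h := congrArg (fun ν : Measure (EuclideanSpace ℝ (Fin m)) => ν Set.univ) (hη1 t ht)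
    simp only [Measure.map_apply measurable_fst MeasurableSet.univ, Set.preimage_univ] at h
    rw [h]; exact measure_univ
  have hγprob : IsProbabilityMeasure γ := by
    constructor
    have h := congrArg (fun ν : Measure (EuclideanSpace ℝ (Fin m)) => ν Set.univ) hγ₁
    simp only [Measure.map_apply measurable_fst MeasurableSet.univ, Set.preimage_univ] at h
    rw [h]; exact measure_univ
  -- the function G
  set G : (EuclideanSpace ℝ (Fin m)) × (EuclideanSpace ℝ (Fin m)) → ℝ := fun p => ⟪gradient ψ p.2, p.2 - p.1⟫ with hGdef
  have hGcont : Continuous G := by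
    rw [hGdef]
    exact (hGcont'.comp continuous_snd).inner (continuous_snd.sub continuous_fst)
  have hGbd : ∀ p : (EuclideanSpace ℝ (Fin m)) × (EuclideanSpace ℝ (Fin m)), ‖p.1‖ ≤ R → ‖p.2‖ ≤ R → |G p| ≤ K₁ * (2 * R) := by
    intro p h1 h2
    refine (abs_real_inner_le_norm _ _).trans ?_
    have h3 : ‖p.2 - p.1‖ ≤ 2 * R := (norm_sub_le _ _).trans (by linarith)
    exact mul_le_mul (hgrad _) h3 (norm_nonneg _) hK₁0
  -- constant C and pointwise estimate
  set C : ℝ := 4 * K₂ * K₁ * R + K₁ ^ 2 with hCdef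
  have hC0 : 0 ≤ C := by positivity
  set F : ℝ → (EuclideanSpace ℝ (Fin m)) × (EuclideanSpace ℝ (Fin m)) → ℝ := fun t p => dist p.1 (U t p.2) ^ 2 - dist p.1 p.2 ^ 2 with hFdef
  have hpt : ∀ t : ℝ, 0 ≤ t → ∀ p : (EuclideanSpace ℝ (Fin m)) × (EuclideanSpace ℝ (Fin m)), ‖p.1‖ ≤ R → ‖p.2‖ ≤ R →
      |F t p - 2 * t * G p| ≤ C * t ^ 2 := by
    intro t ht p hp1 hp2
    have h1 : dist p.1 (U t p.2) ^ 2 = ‖p.1 - p.2‖ ^ 2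
        - 2 * ⟪p.1 - p.2, U t p.2 - p.2⟫ + ‖U t p.2 - p.2‖ ^ 2 := by
      rw [dist_eq_norm, show p.1 - U t p.2 = (p.1 - p.2) - (U t p.2 - p.2) by abel,
        norm_sub_sq_real]
    have h2 : dist p.1 p.2 ^ 2 = ‖p.1 - p.2‖ ^ 2 := by rw [dist_eq_norm]
    have h3 : ⟪p.1 - p.2, (U t p.2 - p.2) - t • gradient ψ p.2⟫
        = ⟪p.1 - p.2, U t p.2 - p.2⟫ - t * ⟪p.1 - p.2, gradient ψ p.2⟫ := by
      rw [inner_sub_right, real_inner_smul_right]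
    have h4 : G p = - ⟪p.1 - p.2, gradient ψ p.2⟫ := by
      have hpq : p.2 - p.1 = -(p.1 - p.2) := by abel
      show ⟪gradient ψ p.2, p.2 - p.1⟫ = - ⟪p.1 - p.2, gradient ψ p.2⟫
      rw [hpq, inner_neg_right, real_inner_comm]
    have e1 : F t p - 2 * t * G p
        = -2 * ⟪p.1 - p.2, (U t p.2 - p.2) - t • gradient ψ p.2⟫
          + ‖U t p.2 - p.2‖ ^ 2 := by
      rw [hFdef]; simp only []
      rw [h1, h2, h3, h4]; ring
    rw [e1]
    have hxy : ‖p.1 - p.2‖ ≤ 2 * R := (norm_sub_le _ _).trans (by linarith)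
    have hI : |⟪p.1 - p.2, (U t p.2 - p.2) - t • gradient ψ p.2⟫| ≤
        (2 * R) * (K₂ * K₁ * t ^ 2) := by
      refine (abs_real_inner_le_norm _ _).trans ?_
      have := hflow2 p.2 t ht
      have h5 : ‖(U t p.2 - p.2) - t • gradient ψ p.2‖ ≤ K₂ * K₁ * t ^ 2 := by
        exact this
      exact mul_le_mul hxy h5 (norm_nonneg _) (by linarith)
    have hW : ‖U t p.2 - p.2‖ ^ 2 ≤ (K₁ * t) ^ 2 :=
      pow_le_pow_left₀ (norm_nonneg _) (hflow1 p.2 t ht) 2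
    have habs := abs_le.1 hI
    have hWnn : (0:ℝ) ≤ ‖U t p.2 - p.2‖ ^ 2 := sq_nonneg _
    have hCt : C * t ^ 2 = 4 * K₂ * K₁ * R * t ^ 2 + K₁ ^ 2 * t ^ 2 := by
      rw [hCdef]; ring
    rw [abs_le]
    constructor
    · linarith [habs.2]
    · linarith [habs.1]
  -- integrability helpers
  have hmeasF : ∀ t, Measurable (F t) := by
    intro t
    apply Measurable.sub
    · exact (measurable_fst.dist ((hUt_meas t).comp measurable_snd)).pow_const 2
    · exact (measurable_fst.dist measurable_snd).pow_const 2
  have hboundF : ∀ t : ℝ, 0 ≤ t → t ≤ 1 → ∀ p : (EuclideanSpace ℝ (Fin m)) × (EuclideanSpace ℝ (Fin m)), ‖p.1‖ ≤ R → ‖p.2‖ ≤ R →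
      |F t p| ≤ C + 2 * (K₁ * (2 * R)) := by
    intro t ht ht1 p h1 h2
    have := hpt t ht p h1 h2
    have hG := hGbd p h1 h2
    have h3 : |F t p| ≤ |F t p - 2 * t * G p| + |2 * t * G p| := by
      have := abs_add_le (F t p - 2 * t * G p) (2 * t * G p)
      simpa using this
    have h4 : |2 * t * G p| = 2 * t * |G p| := by
      rw [abs_mul, abs_of_nonneg (by linarith : (0:ℝ) ≤ 2 * t)]
    have ht2 : t ^ 2 ≤ 1 := by nlinarith
    have h5 : C * t ^ 2 ≤ C := by
      have := mul_le_mul_of_nonneg_left ht2 hC0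
      linarith
    have h6 : 2 * t * |G p| ≤ 2 * (K₁ * (2 * R)) := by
      have := mul_le_mul ht1 hG (abs_nonneg (G p)) (by norm_num : (0:ℝ) ≤ 1)
      linarith
    linarith
  have hintF : ∀ (π : Measure ((EuclideanSpace ℝ (Fin m)) × (EuclideanSpace ℝ (Fin m)))), IsProbabilityMeasure π →
      (∀ᵐ p ∂π, ‖p.1‖ ≤ R ∧ ‖p.2‖ ≤ R) → ∀ t : ℝ, 0 ≤ t → t ≤ 1 →
      Integrable (F t) π := by
    intro π hπ hae t ht ht1
    refine (integrable_const (C + 2 * (K₁ * (2 * R)))).mono'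
      (hmeasF t).aestronglyMeasurable ?_
    filter_upwards [hae] with p hp
    simpa using hboundF t ht ht1 p hp.1 hp.2
  have hintG : ∀ (π : Measure ((EuclideanSpace ℝ (Fin m)) × (EuclideanSpace ℝ (Fin m)))), IsProbabilityMeasure π →
      (∀ᵐ p ∂π, ‖p.1‖ ≤ R ∧ ‖p.2‖ ≤ R) → Integrable G π := by
    intro π hπ hae
    refine (integrable_const (K₁ * (2 * R))).mono'
      hGcont.measurable.aestronglyMeasurable ?_
    filter_upwards [hae] with p hp
    simpa using hGbd p hp.1 hp.2
  have hintdist : ∀ (π : Measure ((EuclideanSpace ℝ (Fin m)) × (EuclideanSpace ℝ (Fin m)))), IsProbabilityMeasure π →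
      (∀ᵐ p ∂π, ‖p.1‖ ≤ R ∧ ‖p.2‖ ≤ R) →
      Integrable (fun p : (EuclideanSpace ℝ (Fin m)) × (EuclideanSpace ℝ (Fin m)) => dist p.1 p.2 ^ 2) π := by
    intro π hπ hae
    refine (integrable_const ((2 * R) ^ 2)).mono'
      ((measurable_fst.dist measurable_snd).pow_const 2).aestronglyMeasurable ?_
    filter_upwards [hae] with p hp
    rw [Real.norm_eq_abs, abs_of_nonneg (pow_nonneg dist_nonneg 2)]
    have : dist p.1 p.2 ≤ 2 * R := by
      rw [dist_eq_norm]
      exact (norm_sub_le _ _).trans (by linarith [hp.1, hp.2])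
    exact pow_le_pow_left₀ dist_nonneg this 2
  have hintdistU : ∀ (π : Measure ((EuclideanSpace ℝ (Fin m)) × (EuclideanSpace ℝ (Fin m)))), IsProbabilityMeasure π →
      (∀ᵐ p ∂π, ‖p.1‖ ≤ R ∧ ‖p.2‖ ≤ R) → ∀ t : ℝ, 0 ≤ t → t ≤ 1 →
      Integrable (fun p : (EuclideanSpace ℝ (Fin m)) × (EuclideanSpace ℝ (Fin m)) => dist p.1 (U t p.2) ^ 2) π := by
    intro π hπ hae t ht ht1
    refine (integrable_const ((2 * R + K₁) ^ 2)).mono'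
      ((measurable_fst.dist ((hUt_meas t).comp measurable_snd)).pow_const
        2).aestronglyMeasurable ?_
    filter_upwards [hae] with p hp
    rw [Real.norm_eq_abs, abs_of_nonneg (pow_nonneg dist_nonneg 2)]
    have hU : ‖U t p.2‖ ≤ R + K₁ := by
      have h1 : ‖U t p.2‖ ≤ ‖p.2‖ + ‖U t p.2 - p.2‖ := by
        have := norm_add_le p.2 (U t p.2 - p.2)
        simpa using this
      have h2 : ‖U t p.2 - p.2‖ ≤ K₁ * t := hflow1 p.2 t ht
      nlinarith [hp.2]
    have : dist p.1 (U t p.2) ≤ 2 * R + K₁ := by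
      rw [dist_eq_norm]
      exact (norm_sub_le _ _).trans (by linarith [hp.1])
    exact pow_le_pow_left₀ dist_nonneg this 2
  -- Upper bound
  have hub : ∀ t ∈ Set.Ioc (0:ℝ) 1, W2sq σ (μ.map (U t)) - W2sq σ μ ≤
      2 * t * (∫ p, G p ∂γ) + C * t ^ 2 := by
    intro t ht
    have haeγ := haein γ hγ₁ hγ₂
    set S : (EuclideanSpace ℝ (Fin m)) × (EuclideanSpace ℝ (Fin m)) → (EuclideanSpace ℝ (Fin m)) × (EuclideanSpace ℝ (Fin m)) := fun p => (p.1, U t p.2) with hSdef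
    have hSmeas : Measurable S := measurable_fst.prodMk ((hUt_meas t).comp measurable_snd)
    have hm1 : (γ.map S).map Prod.fst = σ := by
      rw [Measure.map_map measurable_fst hSmeas]
      have : (Prod.fst ∘ S) = (Prod.fst : (EuclideanSpace ℝ (Fin m)) × (EuclideanSpace ℝ (Fin m)) → (EuclideanSpace ℝ (Fin m))) := rfl
      rw [this, hγ₁]
    have hm2 : (γ.map S).map Prod.snd = μ.map (U t) := by
      rw [Measure.map_map measurable_snd hSmeas]
      have : (Prod.snd ∘ S) = (U t) ∘ (Prod.snd : (EuclideanSpace ℝ (Fin m)) × (EuclideanSpace ℝ (Fin m)) → (EuclideanSpace ℝ (Fin m))) := rfl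
      rw [this, ← Measure.map_map (hUt_meas t) measurable_snd, hγ₂]
    have hcost : ∫ p, dist p.1 p.2 ^ 2 ∂(γ.map S)
        = ∫ p, dist p.1 (U t p.2) ^ 2 ∂γ := by
      rw [integral_map hSmeas.aemeasurable
        ((measurable_fst.dist measurable_snd).pow_const 2).aestronglyMeasurable]
    have hWle : W2sq σ (μ.map (U t)) ≤ ∫ p, dist p.1 (U t p.2) ^ 2 ∂γ := by
      rw [← hcost]; exact W2sq_le_coupling _ _ _ hm1 hm2
    have hA := hintdistU γ hγprob haeγ t ht.1.le ht.2
    have hB := hintdist γ hγprob haeγ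
    have hsub : ∫ p, dist p.1 (U t p.2) ^ 2 ∂γ - ∫ p, dist p.1 p.2 ^ 2 ∂γ
        = ∫ p, F t p ∂γ := by
      rw [hFdef, integral_sub hA hB]
    have hmono : ∫ p, F t p ∂γ ≤ ∫ p, (2 * t * G p + C * t ^ 2) ∂γ := by
      refine integral_mono_ae (hintF γ hγprob haeγ t ht.1.le ht.2)
        (((hintG γ hγprob haeγ).const_mul (2 * t)).add (integrable_const _)) ?_
      filter_upwards [haeγ] with p hp
      have := hpt t ht.1.le p hp.1 hp.2
      have := abs_le.1 this
      linarith [this.2]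
    have hval : ∫ p, (2 * t * G p + C * t ^ 2) ∂γ
        = 2 * t * (∫ p, G p ∂γ) + C * t ^ 2 := by
      rw [integral_add ((hintG γ hγprob haeγ).const_mul (2 * t)) (integrable_const _),
        integral_const_mul, integral_const]
      simp [measure_univ]
    rw [← hopt]
    rw [hval] at hmono
    linarith [hWle, hsub, hmono]
  -- Lower bound
  have hlb : ∀ t ∈ Set.Ioc (0:ℝ) 1, 2 * t * (∫ p, G p ∂(ηt t)) - C * t ^ 2 ≤
      W2sq σ (μ.map (U t)) - W2sq σ μ := by
    intro t ht
    haveI := hηprob t ht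
    have haeη := haein (ηt t) (hη1 t ht) (hη2 t ht)
    have hcost : ∫ p, dist p.1 (U t p.2) ^ 2 ∂(ηt t)
        = ∫ p, dist p.1 p.2 ^ 2 ∂(γt t) := by
      have h0 : ηt t = (γt t).map (T t) := rfl
      rw [h0, integral_map (f := fun p => dist p.1 (U t p.2) ^ 2) (hTmeas t).aemeasurable
        ((measurable_fst.dist ((hUt_meas t).comp' measurable_snd)).pow_const
          2).aestronglyMeasurable]
      refine integral_congr_ae (Filter.Eventually.of_forall fun q => ?_)
      show dist q.1 (U t (V t q.2)) ^ 2 = dist q.1 q.2 ^ 2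
      rw [(hVinv t q.2).2]
    have hW1 : W2sq σ (μ.map (U t)) = ∫ p, dist p.1 (U t p.2) ^ 2 ∂(ηt t) := by
      rw [hcost, hγtopt t ht]
    have hW2 : W2sq σ μ ≤ ∫ p, dist p.1 p.2 ^ 2 ∂(ηt t) :=
      W2sq_le_coupling _ _ _ (hη1 t ht) (hη2 t ht)
    have hA := hintdistU (ηt t) (hηprob t ht) haeη t ht.1.le ht.2
    have hB := hintdist (ηt t) (hηprob t ht) haeη
    have hsub : ∫ p, dist p.1 (U t p.2) ^ 2 ∂(ηt t) - ∫ p, dist p.1 p.2 ^ 2 ∂(ηt t)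
        = ∫ p, F t p ∂(ηt t) := by
      rw [hFdef, integral_sub hA hB]
    have hmono : ∫ p, (2 * t * G p - C * t ^ 2) ∂(ηt t) ≤ ∫ p, F t p ∂(ηt t) := by
      refine integral_mono_ae
        (((hintG (ηt t) (hηprob t ht) haeη).const_mul (2 * t)).sub (integrable_const _))
        (hintF (ηt t) (hηprob t ht) haeη t ht.1.le ht.2) ?_
      filter_upwards [haeη] with p hp
      have := abs_le.1 (hpt t ht.1.le p hp.1 hp.2)
      linarith [this.1]
    have hval : ∫ p, (2 * t * G p - C * t ^ 2) ∂(ηt t)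
        = 2 * t * (∫ p, G p ∂(ηt t)) - C * t ^ 2 := by
      rw [integral_sub ((hintG (ηt t) (hηprob t ht) haeη).const_mul (2 * t))
        (integrable_const _), integral_const_mul, integral_const]
      simp [measure_univ]
    rw [hval] at hmono
    linarith [hW1, hW2, hsub, hmono]
  -- weak convergence endgame
  set L : ℝ := ∫ p, G p ∂γ with hLdef
  set M : ℝ := K₁ * (2 * R) with hMdef
  have hM0 : 0 ≤ M := by rw [hMdef]; positivity
  set g : (EuclideanSpace ℝ (Fin m)) × (EuclideanSpace ℝ (Fin m)) → ℝ :=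
    fun p => max (-M) (min M (G p)) with hgdef
  have hgcont : Continuous g := continuous_const.max (continuous_const.min hGcont)
  have hgbd : ∀ p, |g p| ≤ M := fun p =>
    abs_le.2 ⟨le_max_left _ _, max_le (neg_le_self hM0) (min_le_left _ _)⟩
  have hgeq : ∀ p : (EuclideanSpace ℝ (Fin m)) × (EuclideanSpace ℝ (Fin m)),
      ‖p.1‖ ≤ R → ‖p.2‖ ≤ R → g p = G p := by
    intro p h1 h2
    have h : |G p| ≤ M := by rw [hMdef]; exact hGbd p h1 h2
    have h' := abs_le.1 h
    show max (-M) (min M (G p)) = G p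
    rw [min_eq_right h'.2, max_eq_right h'.1]
  have htendg : Tendsto (fun t => ∫ p, g p ∂(ηt t)) (nhdsWithin 0 (Set.Ioi 0))
      (nhds (∫ p, g p ∂γ)) := hweak g hgcont ⟨M, hgbd⟩
  have heqγ : ∫ p, g p ∂γ = L := by
    rw [hLdef]
    exact integral_congr_ae ((haein γ hγ₁ hγ₂).mono fun p hp => hgeq p hp.1 hp.2)
  rw [heqγ] at htendg
  have hmemIoc : Set.Ioc (0:ℝ) 1 ∈ nhdsWithin (0:ℝ) (Set.Ioi 0) :=
    Ioc_mem_nhdsGT_of_mem ⟨le_refl 0, by norm_num⟩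
  have htendG : Tendsto (fun t => ∫ p, G p ∂(ηt t)) (nhdsWithin 0 (Set.Ioi 0)) (nhds L) := by
    refine Tendsto.congr' ?_ htendg
    filter_upwards [hmemIoc] with t ht
    exact integral_congr_ae
      ((haein (ηt t) (hη1 t ht) (hη2 t ht)).mono fun p hp => hgeq p hp.1 hp.2)
  have hCt : Tendsto (fun t : ℝ => C * t) (nhdsWithin 0 (Set.Ioi 0)) (nhds 0) := by
    have hc : Continuous (fun t : ℝ => C * t) := continuous_const.mul continuous_id
    have h := hc.tendsto (0:ℝ)
    have h' := h.mono_left (nhdsWithin_le_nhds (s := Set.Ioi (0:ℝ)))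
    simpa using h'
  have hlo : Tendsto (fun t => 2 * (∫ p, G p ∂(ηt t)) - C * t)
      (nhdsWithin 0 (Set.Ioi 0)) (nhds (2 * L)) := by
    have h := (htendG.const_mul 2).sub hCt
    simpa using h
  have hhi : Tendsto (fun t : ℝ => 2 * L + C * t)
      (nhdsWithin 0 (Set.Ioi 0)) (nhds (2 * L)) := by
    have h := (tendsto_const_nhds (x := 2 * L)
      (f := nhdsWithin (0:ℝ) (Set.Ioi 0))).add hCt
    simpa using h
  have hgoal : Tendsto (fun t => (W2sq σ (μ.map (U t)) - W2sq σ μ) / t)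
      (nhdsWithin 0 (Set.Ioi 0)) (nhds (2 * L)) := by
    refine tendsto_of_tendsto_of_tendsto_of_le_of_le' hlo hhi ?_ ?_
    · filter_upwards [hmemIoc] with t ht
      rw [le_div_iff₀ ht.1]
      have h := hlb t ht
      have he : (2 * (∫ p, G p ∂(ηt t)) - C * t) * t
          = 2 * t * (∫ p, G p ∂(ηt t)) - C * t ^ 2 := by ring
      linarith [h, he.le, he.ge]
    · filter_upwards [hmemIoc] with t ht
      rw [div_le_iff₀ ht.1]
      have h := hub t ht
      have he : (2 * L + C * t) * t = 2 * t * L + C * t ^ 2 := by ring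
      linarith [h, he.le, he.ge]
  exact hgoal
end
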